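/- arXiv:1806.00521 — 5 statements merged into one kernel-verified Lean document; each statement's English description precedes it below -/
import Mathlib

section
/- For every fixed α with 0 < α < 1/2, the number X_N of outdegree-two vertices in a uniformly random lemniscate tree concentrates about its mean: P(|X_N − μ_N| > N^{α + 1/2}) = O(N^{α − 1/2}) as N → ∞; in particular this probability tends to 0. -/
/-!
A lemniscate tree on `N` vertices is a rooted nonplane binary tree whose vertices are
bijectively labeled `1,…,N` (here: `Fin N`, with vertex `0` playing the role of label 1)
such that labels strictly increase along every path directed away from the root.
Since children are unordered, such a tree is faithfully encoded by its parent function: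
vertex `0` is the root (it has no parent), every other vertex has a parent with strictly
smaller label, and every vertex has at most two children.
-/
def LemniscateTree (N : ℕ) : Type :=
  {f : Fin N → Option (Fin N) //
    (∀ i : Fin N, f i = none ↔ (i : ℕ) = 0) ∧
    (∀ i j : Fin N, f i = some j → (j : ℕ) < (i : ℕ)) ∧
    (∀ j : Fin N, (Finset.univ.filter fun i => f i = some j).card ≤ 2)}

instance (N : ℕ) : Fintype (LemniscateTree N) := by
  unfold LemniscateTree; infer_instance

/-- The number of vertices of outdegree two (i.e. with exactly two children). -/
def outdegTwoCount {N : ℕ} (T : LemniscateTree N) : ℕ :=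
  (Finset.univ.filter fun j : Fin N =>
    (Finset.univ.filter fun i => T.1 i = some j).card = 2).card

/-- `μ_N`: the mean number of outdegree-two vertices of a uniformly random
lemniscate tree on `N` vertices. -/
noncomputable def lemMean (N : ℕ) : ℝ :=
  (∑ T : LemniscateTree N, (outdegTwoCount T : ℝ)) / (Fintype.card (LemniscateTree N))

open scoped Classical in
/-- The probability that a uniformly random lemniscate tree on `N` vertices has
`|X_N − μ_N| > N^{α+1/2}`, where `X_N` is its number of outdegree-two vertices. -/
noncomputable def devProb (N : ℕ) (α : ℝ) : ℝ :=
  ((Finset.univ.filter fun T : LemniscateTree N =>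
      (N : ℝ) ^ (α + 1 / 2) < |(outdegTwoCount T : ℝ) - lemMean N|).card : ℝ) /
    (Fintype.card (LemniscateTree N))

open Finset Polynomial

namespace LemConc

/-- child count -/
def cc {N : ℕ} (f : Fin N → Option (Fin N)) (j : Fin N) : ℕ :=
  (Finset.univ.filter fun i => f i = some j).card

lemma cc_eq_sum {N : ℕ} (f : Fin N → Option (Fin N)) (j : Fin N) :
    cc f j = ∑ i : Fin N, if f i = some j then 1 else 0 := Finset.card_filter _ _

lemma outdeg_eq {N : ℕ} (T : LemniscateTree N) :
    outdegTwoCount T = (Finset.univ.filter fun j : Fin N => cc T.1 j = 2).card := rfl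

lemma sum_inner {N : ℕ} (o : Option (Fin N)) :
    (∑ j : Fin N, if o = some j then 1 else 0) = if o = none then 0 else 1 := by
  cases o with
  | none => simp
  | some p => simp [eq_comm (a := some p)]

lemma sum_cc {N : ℕ} (hN : 1 ≤ N) (T : LemniscateTree N) :
    ∑ j : Fin N, cc T.1 j = N - 1 := by
  have h0 : ∀ i : Fin N, (T.1 i = none) ↔ i = ⟨0, hN⟩ := by
    intro i
    rw [T.2.1 i]
    constructor
    · intro h; exact Fin.ext h
    · intro h; rw [h]
  calc ∑ j : Fin N, cc T.1 j = ∑ j : Fin N, ∑ i : Fin N, if T.1 i = some j then 1 else 0 := by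
        simp [cc_eq_sum]
    _ = ∑ i : Fin N, ∑ j : Fin N, if T.1 i = some j then 1 else 0 := Finset.sum_comm
    _ = ∑ i : Fin N, if T.1 i = none then 0 else 1 := by
        refine Finset.sum_congr rfl fun i _ => sum_inner _
    _ = ∑ i : Fin N, if i = ⟨0, hN⟩ then 0 else 1 := by
        refine Finset.sum_congr rfl fun i _ => by simp [h0 i]
    _ = N - 1 := by
        have : (∑ i : Fin N, if i = ⟨0, hN⟩ then 0 else 1)
            = (Finset.univ.filter fun i : Fin N => ¬ (i = ⟨0, hN⟩)).card := by
          rw [Finset.card_filter]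
          exact Finset.sum_congr rfl fun i _ => by by_cases h : i = ⟨0, hN⟩ <;> simp [h]
        rw [this, Finset.filter_not, Finset.filter_eq', if_pos (Finset.mem_univ _),
          Finset.card_sdiff_of_subset (by simp)]
        simp
  
lemma counts {N : ℕ} (hN : 1 ≤ N) (T : LemniscateTree N) :
    (Finset.univ.filter fun j : Fin N => cc T.1 j = 0).card = outdegTwoCount T + 1 ∧
    (Finset.univ.filter fun j : Fin N => cc T.1 j = 1).card = N - 1 - 2 * outdegTwoCount T ∧
    2 * outdegTwoCount T + 1 ≤ N := by
  have hle : ∀ j : Fin N, cc T.1 j ≤ 2 := T.2.2.2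
  have e1 : (Finset.univ.filter fun j : Fin N => cc T.1 j = 0).card
      + (Finset.univ.filter fun j : Fin N => cc T.1 j = 1).card
      + (Finset.univ.filter fun j : Fin N => cc T.1 j = 2).card = N := by
    rw [Finset.card_filter, Finset.card_filter, Finset.card_filter, ← Finset.sum_add_distrib,
      ← Finset.sum_add_distrib]
    have : ∀ j : Fin N, ((if cc T.1 j = 0 then 1 else 0) + (if cc T.1 j = 1 then 1 else 0))
        + (if cc T.1 j = 2 then 1 else 0) = 1 := by
      intro j; have := hle j; interval_cases h : cc T.1 j <;> simp
    simp only [this]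
    simp
  have e2 : (Finset.univ.filter fun j : Fin N => cc T.1 j = 1).card
      + 2 * (Finset.univ.filter fun j : Fin N => cc T.1 j = 2).card = N - 1 := by
    rw [Finset.card_filter, Finset.card_filter, Finset.mul_sum, ← Finset.sum_add_distrib,
      ← sum_cc hN T]
    refine Finset.sum_congr rfl fun j _ => ?_
    have := hle j; interval_cases h : cc T.1 j <;> simp
  rw [outdeg_eq]
  omega


section Bij

variable {n : ℕ}

/-- restriction of a parent function on `Fin (n+1)` to `Fin n` -/
def res (f : Fin (n+1) → Option (Fin (n+1))) (i : Fin n) : Option (Fin n) :=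
  (f i.castSucc).bind fun j => if h : (j : ℕ) < n then some ⟨j, h⟩ else none

lemma res_eq_some (T : LemniscateTree (n+1)) (i : Fin n) (j : Fin n) :
    res T.1 i = some j ↔ T.1 i.castSucc = some j.castSucc := by
  cases h : T.1 i.castSucc with
  | none => simp [res, h]
  | some p =>
    have hp : (p : ℕ) < n := lt_of_lt_of_le (T.2.2.1 _ _ h) (by simp)
    simp only [res, h, Option.bind_some, dif_pos hp, Option.some_inj]
    rw [Fin.ext_iff, Fin.ext_iff]
    simp

lemma res_eq_none (T : LemniscateTree (n+1)) (i : Fin n) :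
    res T.1 i = none ↔ (i : ℕ) = 0 := by
  cases h : T.1 i.castSucc with
  | none =>
    simp only [res, h, Option.bind_none]
    have := (T.2.1 i.castSucc).mp h
    simp only [Fin.coe_castSucc] at this
    simp [this]
  | some p =>
    have hp : (p : ℕ) < n := lt_of_lt_of_le (T.2.2.1 _ _ h) (by simp)
    simp only [res, h, Option.bind_some, dif_pos hp]
    have : ¬ ((i.castSucc : ℕ) = 0) := fun hc => by
      rw [(T.2.1 i.castSucc).mpr hc] at h; exact nomatch h
    simpa using this

lemma cc_res_add (T : LemniscateTree (n+1)) (j : Fin n) :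
    cc T.1 j.castSucc = cc (res T.1) j + (if T.1 (Fin.last n) = some j.castSucc then 1 else 0) := by
  rw [cc_eq_sum, cc_eq_sum, Fin.sum_univ_castSucc]
  congr 1
  refine Finset.sum_congr rfl fun i _ => ?_
  have := res_eq_some T i j
  by_cases h : T.1 i.castSucc = some j.castSucc
  · rw [if_pos h, if_pos (this.mpr h)]
  · rw [if_neg h, if_neg (fun hc => h (this.mp hc))]

def resTree (T : LemniscateTree (n+1)) : LemniscateTree n :=
  ⟨res T.1, fun i => res_eq_none T i,
    fun i j h => by have := (res_eq_some T i j).mp h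
                    have := T.2.2.1 _ _ this
                    simpa using this,
    fun j => by
      have h1 := cc_res_add T j
      have h2 := T.2.2.2 j.castSucc
      change cc T.1 j.castSucc ≤ 2 at h2
      change (cc (res T.1) j) ≤ 2
      omega⟩

lemma lastParent_aux (hn : 1 ≤ n) (T : LemniscateTree (n+1)) :
    ∃ p : Fin n, T.1 (Fin.last n) = some p.castSucc := by
  cases h : T.1 (Fin.last n) with
  | none =>
    have := (T.2.1 _).mp h
    simp [Fin.last] at this
    omega
  | some p =>
    have hp : (p : ℕ) < n := by have := T.2.2.1 _ _ h; simpa using this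
    exact ⟨⟨p, hp⟩, congrArg some (Fin.ext rfl)⟩

/-- extension of a parent function by a new maximal vertex attached to `j` -/
def ext (f : Fin n → Option (Fin n)) (j : Fin n) (i : Fin (n+1)) : Option (Fin (n+1)) :=
  if h : (i : ℕ) < n then (f ⟨i, h⟩).map Fin.castSucc else some j.castSucc

lemma ext_castSucc (f : Fin n → Option (Fin n)) (j : Fin n) (i : Fin n) :
    ext f j i.castSucc = (f i).map Fin.castSucc := by
  have h : ((i.castSucc : Fin (n+1)) : ℕ) < n := by simp
  rw [ext, dif_pos h]
  congr 1

lemma ext_last (f : Fin n → Option (Fin n)) (j : Fin n) :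
    ext f j (Fin.last n) = some j.castSucc := by
  rw [ext, dif_neg (by simp)]

lemma cc_ext_castSucc (f : Fin n → Option (Fin n)) (j : Fin n) (j' : Fin n) :
    cc (ext f j) j'.castSucc = cc f j' + (if j' = j then 1 else 0) := by
  rw [cc_eq_sum, cc_eq_sum, Fin.sum_univ_castSucc]
  congr 1
  · refine Finset.sum_congr rfl fun i _ => ?_
    rw [ext_castSucc]
    cases h : f i with
    | none => simp
    | some p => simp [h, Fin.castSucc_inj]
  · rw [ext_last]
    simp only [Option.some_inj]
    by_cases h : j' = j
    · rw [if_pos (by rw [h]), if_pos h]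
    · rw [if_neg (fun hc => h (Fin.castSucc_injective n hc).symm), if_neg h]

lemma cc_ext_last (f : Fin n → Option (Fin n)) (j : Fin n) :
    cc (ext f j) (Fin.last n) = 0 := by
  rw [cc, Finset.card_eq_zero, Finset.filter_eq_empty_iff]
  intro i _
  by_cases h : (i : ℕ) < n
  · rw [ext, dif_pos h]
    cases hf : f ⟨i, h⟩ with
    | none => simp
    | some p => simp only [hf, Option.map_some]
                intro hc
                exact absurd (Option.some_inj.mp hc) (Fin.castSucc_lt_last p).ne
  · rw [ext, dif_neg h]
    intro hc
    exact absurd (Option.some_inj.mp hc) (Fin.castSucc_lt_last j).ne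

def extTree (T : LemniscateTree n) (j : Fin n) (hj : cc T.1 j ≤ 1) : LemniscateTree (n+1) :=
  ⟨ext T.1 j, by
      intro i
      by_cases h : (i : ℕ) < n
      · rw [ext, dif_pos h]
        rw [Option.map_eq_none_iff]
        exact T.2.1 ⟨i, h⟩
      · rw [ext, dif_neg h]
        have hi : (i:ℕ) = n := by omega
        have hn := j.pos
        simp only [hi]
        constructor
        · intro hc; exact absurd hc (by simp)
        · intro hc; omega,
    by
      intro i q hq
      by_cases h : (i : ℕ) < n
      · rw [ext, dif_pos h] at hq
        cases hf : T.1 ⟨i, h⟩ with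
        | none => rw [hf] at hq; simp at hq
        | some p =>
          rw [hf] at hq
          have := T.2.2.1 _ _ hf
          have hpq : p.castSucc = q := Option.some_inj.mp (by simpa using hq)
          rw [← hpq]
          simpa using this
      · rw [ext, dif_neg h] at hq
        have hq' : j.castSucc = q := Option.some_inj.mp hq
        rw [← hq']
        have hi : (i:ℕ) = n := by omega
        simp only [hi, Fin.coe_castSucc]
        exact j.2,
    by
      intro q
      change cc (ext T.1 j) q ≤ 2
      rcases Fin.eq_castSucc_or_eq_last q with ⟨q', rfl⟩ | rfl
      · rw [cc_ext_castSucc]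
        by_cases h : q' = j
        · rw [if_pos h, h]; omega
        · rw [if_neg h]
          have := T.2.2.2 q'
          change cc T.1 q' ≤ 2 at this
          omega
      · rw [cc_ext_last]; omega⟩

lemma outdeg_extTree (T : LemniscateTree n) (j : Fin n) (hj : cc T.1 j ≤ 1) :
    outdegTwoCount (extTree T j hj) = outdegTwoCount T + (if cc T.1 j = 1 then 1 else 0) := by
  rw [outdeg_eq, outdeg_eq, Finset.card_filter, Finset.card_filter, Fin.sum_univ_castSucc]
  have hlast : cc ((extTree T j hj).1) (Fin.last n) = 0 := cc_ext_last T.1 j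
  rw [hlast]
  simp only [OfNat.zero_ne_ofNat, if_false, add_zero]
  have key : ∀ j' : Fin n,
      (if cc ((extTree T j hj).1) j'.castSucc = 2 then 1 else 0)
      = (if cc T.1 j' = 2 then 1 else 0) + (if j' = j then (if cc T.1 j = 1 then 1 else 0) else 0) := by
    intro j'
    have h := cc_ext_castSucc T.1 j j'
    change cc ((extTree T j hj).1) j'.castSucc = _ at h
    rw [h]
    by_cases hjj : j' = j
    · subst hjj
      rw [if_pos rfl, if_pos rfl]
      rcases Nat.lt_or_ge (cc T.1 j') 1 with h1 | h1
      · have : cc T.1 j' = 0 := by omega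
        simp [this]
      · have : cc T.1 j' = 1 := by omega
        simp [this]
    · rw [if_neg hjj, if_neg hjj]
      simp
  simp only [key]
  rw [Finset.sum_add_distrib, Finset.sum_ite_eq' Finset.univ j, if_pos (Finset.mem_univ _)]

end Bij


section EquivQ

variable {n : ℕ}

noncomputable def extEquiv (hn : 1 ≤ n) :
    LemniscateTree (n+1) ≃ (Σ T : LemniscateTree n, {j : Fin n // cc T.1 j ≤ 1}) where
  toFun T := ⟨resTree T, ⟨(lastParent_aux hn T).choose, by
      have hspec := (lastParent_aux hn T).choose_spec
      have h1 := cc_res_add T (lastParent_aux hn T).choose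
      rw [if_pos hspec] at h1
      have h2 := T.2.2.2 ((lastParent_aux hn T).choose.castSucc)
      change cc T.1 _ ≤ 2 at h2
      change cc (res T.1) _ ≤ 1
      omega⟩⟩
  invFun x := extTree x.1 x.2.1 x.2.2
  left_inv T := by
    apply Subtype.ext
    funext i
    rcases Fin.eq_castSucc_or_eq_last i with ⟨i', rfl⟩ | rfl
    · rw [show (extTree (resTree T) (lastParent_aux hn T).choose _).1 i'.castSucc
          = ((resTree T).1 i').map Fin.castSucc from ext_castSucc _ _ i']
      cases h : T.1 i'.castSucc with
      | none =>
        rw [show (resTree T).1 i' = none from by simp [resTree, res, h]]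
        rfl
      | some q =>
        have hq : (q:ℕ) < n := lt_of_lt_of_le (T.2.2.1 _ _ h) (by simp)
        rw [show (resTree T).1 i' = some ⟨q, hq⟩ from by simp [resTree, res, h, hq]]
        rw [Option.map_some]
        exact congrArg some (Fin.ext rfl)
    · rw [show (extTree (resTree T) (lastParent_aux hn T).choose _).1 (Fin.last n)
          = some ((lastParent_aux hn T).choose.castSucc) from ext_last _ _]
      exact (lastParent_aux hn T).choose_spec.symm
  right_inv x := by
    rcases x with ⟨T, j, hj⟩
    have h₁ : resTree (extTree T j hj) = T := by
      apply Subtype.ext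
      funext i
      cases h : T.1 i with
      | none =>
        rw [show (resTree (extTree T j hj)).1 i
            = ((extTree T j hj).1 i.castSucc).bind
              (fun p => if h : (p:ℕ) < n then some ⟨p, h⟩ else none) from rfl]
        rw [show (extTree T j hj).1 i.castSucc = (T.1 i).map Fin.castSucc from ext_castSucc _ _ i]
        rw [h]
        rfl
      | some p =>
        rw [show (resTree (extTree T j hj)).1 i
            = ((extTree T j hj).1 i.castSucc).bind
              (fun p => if h : (p:ℕ) < n then some ⟨p, h⟩ else none) from rfl]
        rw [show (extTree T j hj).1 i.castSucc = (T.1 i).map Fin.castSucc from ext_castSucc _ _ i]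
        rw [h, Option.map_some, Option.bind_some, dif_pos (show ((p.castSucc : Fin (n+1)):ℕ) < n by simp [p.2])]
        exact congrArg some (Fin.ext (by simp))
    apply Sigma.subtype_ext h₁
    show (lastParent_aux hn (extTree T j hj)).choose = j
    have hspec := (lastParent_aux hn (extTree T j hj)).choose_spec
    have he : (extTree T j hj).1 (Fin.last n) = some j.castSucc := ext_last _ _
    have hsj : some ((lastParent_aux hn (extTree T j hj)).choose.castSucc)
        = some j.castSucc := hspec.symm.trans he
    exact Fin.castSucc_injective n (Option.some_inj.mp hsj)

/-- the generating polynomial of the outdegree-2 statistic -/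
noncomputable def Q (n : ℕ) : Polynomial ℝ :=
  ∑ T : LemniscateTree n, (X : Polynomial ℝ) ^ (outdegTwoCount T)

lemma Q_step (hn : 1 ≤ n) :
    Q (n+1) = ∑ T : LemniscateTree n,
      ((outdegTwoCount T + 1) • (X : Polynomial ℝ) ^ (outdegTwoCount T)
        + (n - 1 - 2 * outdegTwoCount T) • (X : Polynomial ℝ) ^ (outdegTwoCount T + 1)) := by
  rw [Q, ← Equiv.sum_comp (extEquiv hn).symm (fun T => (X : Polynomial ℝ) ^ (outdegTwoCount T))]
  rw [← Finset.univ_sigma_univ, Finset.sum_sigma]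
  refine Finset.sum_congr rfl fun T _ => ?_
  have hsum : ∀ jj : {j : Fin n // cc T.1 j ≤ 1},
      (X : Polynomial ℝ) ^ (outdegTwoCount ((extEquiv hn).symm ⟨T, jj⟩))
      = (X : Polynomial ℝ) ^ (outdegTwoCount T + if cc T.1 jj.1 = 1 then 1 else 0) := by
    rintro ⟨j, hj⟩
    rw [show (extEquiv hn).symm ⟨T, ⟨j, hj⟩⟩ = extTree T j hj from rfl, outdeg_extTree]
  rw [Finset.sum_congr rfl fun jj _ => hsum jj]
  rw [← Finset.sum_subtype (Finset.univ.filter fun j : Fin n => cc T.1 j ≤ 1)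
    (fun j => by simp) (fun j => (X : Polynomial ℝ) ^ (outdegTwoCount T + if cc T.1 j = 1 then 1 else 0))]
  have hsplit : (Finset.univ.filter fun j : Fin n => cc T.1 j ≤ 1)
      = (Finset.univ.filter fun j : Fin n => cc T.1 j = 0)
        ∪ (Finset.univ.filter fun j : Fin n => cc T.1 j = 1) := by
    ext j; simp; omega
  have hdisj : Disjoint (Finset.univ.filter fun j : Fin n => cc T.1 j = 0)
      (Finset.univ.filter fun j : Fin n => cc T.1 j = 1) := by
    rw [Finset.disjoint_left]; intro a ha hb
    simp only [Finset.mem_filter] at ha hb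
    omega
  rw [hsplit, Finset.sum_union hdisj]
  have e0 : ∀ j ∈ (Finset.univ.filter fun j : Fin n => cc T.1 j = 0),
      (X : Polynomial ℝ) ^ (outdegTwoCount T + if cc T.1 j = 1 then 1 else 0)
      = (X : Polynomial ℝ) ^ (outdegTwoCount T) := by
    intro j hjm
    simp only [Finset.mem_filter] at hjm
    rw [if_neg (by omega), add_zero]
  have e1 : ∀ j ∈ (Finset.univ.filter fun j : Fin n => cc T.1 j = 1),
      (X : Polynomial ℝ) ^ (outdegTwoCount T + if cc T.1 j = 1 then 1 else 0)
      = (X : Polynomial ℝ) ^ (outdegTwoCount T + 1) := by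
    intro j hjm
    simp only [Finset.mem_filter] at hjm
    rw [if_pos hjm.2]
  rw [Finset.sum_congr rfl e0, Finset.sum_congr rfl e1, Finset.sum_const, Finset.sum_const,
    (counts hn T).1, (counts hn T).2.1]

lemma Q_rec (hn : 1 ≤ n) :
    Q (n+1) = Q n + C ((n:ℝ) - 1) * (X * Q n) + (X - C 2 * X ^ 2) * derivative (Q n) := by
  rw [Q_step hn, Q]
  rw [map_sum derivative]
  simp only [Finset.mul_sum, ← Finset.sum_add_distrib]
  refine Finset.sum_congr rfl fun T _ => ?_
  have hx := (counts hn T).2.2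
  set x := outdegTwoCount T with hxdef
  have hcast : ((n - 1 - 2 * x : ℕ) : ℝ) = (n:ℝ) - 1 - 2 * x := by
    push_cast [Nat.cast_sub (by omega : 2*x ≤ n - 1), Nat.cast_sub (by omega : 1 ≤ n)]
    ring
  rw [nsmul_eq_mul, nsmul_eq_mul, ← C_eq_natCast, ← C_eq_natCast, hcast, derivative_X_pow]
  push_cast
  cases x with
  | zero => simp
  | succ m =>
    have h1 : (X : Polynomial ℝ) ^ (m + 1) = X ^ m * X := by ring
    have h2 : (X : Polynomial ℝ) ^ (m + 1 + 1) = X ^ m * X * X := by ring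
    simp only [Nat.add_sub_cancel, h1, h2, map_sub, map_add, map_mul, map_one, map_ofNat]
    push_cast
    ring

end EquivQ


section Base

def t1 : LemniscateTree 1 :=
  ⟨fun _ => none, fun i => by simp [Fin.val_eq_zero], fun i j h => by simp at h,
    fun j => by simp⟩

lemma LT1_eq (T : LemniscateTree 1) : T = t1 :=
  Subtype.ext (funext fun i => (T.2.1 i).mpr (Fin.val_eq_zero i))

lemma outdeg_t1 (T : LemniscateTree 1) : outdegTwoCount T = 0 := by
  rw [LT1_eq T]
  rfl

lemma card_LT1 : Fintype.card (LemniscateTree 1) = 1 :=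
  Fintype.card_eq_one_iff.mpr ⟨t1, fun T => LT1_eq T⟩

lemma Q_one : Q 1 = 1 := by
  rw [Q]
  rw [Finset.sum_congr rfl fun T _ => by rw [outdeg_t1 T, pow_zero]]
  rw [Finset.sum_const, Finset.card_univ, card_LT1, one_smul]

end Base

section Interlace

lemma exists_root_between {p : Polynomial ℝ} {a b : ℝ} (hab : a < b)
    (h : p.eval a * p.eval b < 0) : ∃ x, a < x ∧ x < b ∧ p.eval x = 0 := by
  rcases mul_neg_iff.mp h with ⟨ha, hb⟩ | ⟨ha, hb⟩
  · have key := intermediate_value_Ioo' (le_of_lt hab) (p.continuousOn (s := Set.Icc a b))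
    rcases key ⟨hb, ha⟩ with ⟨x, hx, hfx⟩
    exact ⟨x, hx.1, hx.2, hfx⟩
  · have key := intermediate_value_Ioo (le_of_lt hab) (p.continuousOn (s := Set.Icc a b))
    rcases key ⟨ha, hb⟩ with ⟨x, hx, hfx⟩
    exact ⟨x, hx.1, hx.2, hfx⟩

lemma prod_erase_sign {k : ℕ} (r : Fin k → ℝ) (hmono : StrictMono r) (j : Fin k) :
    0 < (-1:ℝ)^((Finset.Ioi j).card) * ∏ m ∈ Finset.univ.erase j, (r j - r m) := by
  have hsplit : Finset.univ.erase j = Finset.Iio j ∪ Finset.Ioi j := by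
    ext m
    simp only [Finset.mem_erase, Finset.mem_univ, and_true, Finset.mem_union,
      Finset.mem_Iio, Finset.mem_Ioi]
    exact ne_iff_lt_or_gt
  have hdisj : Disjoint (Finset.Iio j) (Finset.Ioi j) := by
    rw [Finset.disjoint_left]
    intro a ha hb
    simp only [Finset.mem_Iio] at ha
    simp only [Finset.mem_Ioi] at hb
    exact absurd (ha.trans hb) (lt_irrefl a)
  rw [hsplit, Finset.prod_union hdisj]
  have h1 : 0 < ∏ m ∈ Finset.Iio j, (r j - r m) :=
    Finset.prod_pos fun m hm => sub_pos.2 (hmono (Finset.mem_Iio.mp hm))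
  have h2 : 0 < ∏ m ∈ Finset.Ioi j, (r m - r j) :=
    Finset.prod_pos fun m hm => sub_pos.2 (hmono (Finset.mem_Ioi.mp hm))
  have hneg : (-1:ℝ)^((Finset.Ioi j).card) * ∏ m ∈ Finset.Ioi j, (r j - r m)
      = ∏ m ∈ Finset.Ioi j, (r m - r j) := by
    rw [← Finset.prod_const (-1:ℝ), ← Finset.prod_mul_distrib]
    exact Finset.prod_congr rfl fun m _ => by ring
  calc (0:ℝ) < (∏ m ∈ Finset.Iio j, (r j - r m)) * ∏ m ∈ Finset.Ioi j, (r m - r j) :=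
        mul_pos h1 h2
    _ = (-1:ℝ)^((Finset.Ioi j).card)
        * ((∏ m ∈ Finset.Iio j, (r j - r m)) * ∏ m ∈ Finset.Ioi j, (r j - r m)) := by
        rw [← hneg]; ring

end Interlace


section Step

open Polynomial

lemma factor_of_roots {R : Polynomial ℝ} {K : ℕ} (x : Fin K → ℝ)
    (hinj : Function.Injective x) (hroot : ∀ m, R.eval (x m) = 0)
    (hne : R ≠ 0) (hdeg : R.natDegree ≤ K) :
    R.natDegree = K ∧ R = Polynomial.C R.leadingCoeff * ∏ m, (X - Polynomial.C (x m)) := by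
  classical
  set M : Multiset ℝ := Multiset.map x Finset.univ.val with hM
  have hnodup : M.Nodup := Multiset.Nodup.map hinj Finset.univ.nodup
  have hmem : ∀ a ∈ M, a ∈ R.roots := by
    intro a ha
    rcases Multiset.mem_map.mp ha with ⟨m, _, rfl⟩
    exact (Polynomial.mem_roots hne).mpr (hroot m)
  have hle : M ≤ R.roots := by
    rw [Multiset.le_iff_count]
    intro a
    by_cases ha : a ∈ M
    · rw [Multiset.count_eq_one_of_mem hnodup ha]
      exact Multiset.one_le_count_iff_mem.mpr (hmem a ha)
    · rw [Multiset.count_eq_zero_of_notMem ha]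
      exact Nat.zero_le _
  have hcardM : Multiset.card M = K := by simp [hM]
  have hcard1 : K ≤ Multiset.card R.roots := by
    rw [← hcardM]; exact Multiset.card_le_card hle
  have hcard2 : Multiset.card R.roots ≤ R.natDegree := R.card_roots'
  have hdegK : R.natDegree = K := le_antisymm hdeg (le_trans hcard1 hcard2)
  have hMeq : M = R.roots := Multiset.eq_of_le_of_card_le hle (by omega)
  have hfact := Polynomial.C_leadingCoeff_mul_prod_multiset_X_sub_C
    (p := R) (by omega)
  rw [← hMeq, hM, Multiset.map_map] at hfact
  refine ⟨hdegK, ?_⟩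
  rw [Finset.prod_eq_multiset_prod]
  have hcmp : Multiset.map (fun m => X - Polynomial.C (x m)) Finset.univ.val
      = Multiset.map ((fun a => X - Polynomial.C a) ∘ x) Finset.univ.val := rfl
  rw [hcmp]
  exact hfact.symm

lemma lead_pos_of_eval_zero_pos {R : Polynomial ℝ} {K : ℕ} {x : Fin K → ℝ}
    (hx : ∀ m, x m < 0) (hfact : R = Polynomial.C R.leadingCoeff * ∏ m, (X - Polynomial.C (x m)))
    (h0 : 0 < R.eval 0) : 0 < R.leadingCoeff := by
  have heval : R.eval 0 = R.leadingCoeff * ∏ m, (0 - x m) := by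
    conv_lhs => rw [hfact]
    simp [Polynomial.eval_prod]
  have hpos : 0 < ∏ m : Fin K, (0 - x m) :=
    Finset.prod_pos fun m _ => by have := hx m; linarith
  nlinarith [heval, h0, hpos]

lemma interlace_step (k : ℕ) (c b : ℝ) (hc : 0 < c) (r : Fin k → ℝ)
    (hmono : StrictMono r) (hneg : ∀ j, r j < 0)
    (hb : b = 2 * k ∨ 2 * k + 1 ≤ b)
    (P R : Polynomial ℝ)
    (hP : P = Polynomial.C c * ∏ j, (X - Polynomial.C (r j)))
    (hR : R = P + Polynomial.C b * (X * P) + (X - Polynomial.C 2 * X ^ 2) * derivative P) :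
    ∃ (k' : ℕ) (c' : ℝ) (r' : Fin k' → ℝ), 0 < c' ∧ StrictMono r' ∧ (∀ j, r' j < 0) ∧
      ((b = 2 * k ∧ k' = k) ∨ (2 * k + 1 ≤ b ∧ k' = k + 1)) ∧
      R = Polynomial.C c' * ∏ j, (X - Polynomial.C (r' j)) := by
  classical
  -- the case k = 0 is explicit
  rcases Nat.eq_zero_or_pos k with hk0 | hkpos
  · subst hk0
    have hPc : P = Polynomial.C c := by rw [hP]; simp
    have hRc : R = Polynomial.C c + Polynomial.C (b * c) * X := by
      rw [hR, hPc]
      simp only [derivative_C, mul_zero, add_zero, map_mul]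
      ring
    rcases hb with hb1 | hb2
    · have hb0 : b = 0 := by simpa using hb1
      refine ⟨0, c, Fin.elim0, hc, fun a => a.elim0, fun a => a.elim0, Or.inl ⟨hb1, rfl⟩, ?_⟩
      rw [hRc, hb0]
      simp
    · have hbpos : (0:ℝ) < b := by norm_num at hb2 ⊢; linarith
      refine ⟨1, b * c, fun _ => -(1/b), mul_pos hbpos hc, ?_, fun _ => neg_lt_zero.mpr (by positivity), Or.inr ⟨hb2, rfl⟩, ?_⟩
      · intro a a' hlt
        have : a = a' := Subsingleton.elim a a'
        rw [this] at hlt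
        exact absurd hlt (lt_irrefl _)
      · rw [hRc, Fin.prod_univ_one]
        rw [mul_sub, ← map_mul]
        have hbc : b * c * -(1/b) = -c := by field_simp
        rw [hbc, map_neg, sub_neg_eq_add]
        ring
  -- main case : 1 ≤ k
  have hMon : (∏ j : Fin k, (X - Polynomial.C (r j))).Monic :=
    monic_prod_of_monic _ _ fun j _ => monic_X_sub_C _
  have hMdeg : (∏ j : Fin k, (X - Polynomial.C (r j))).natDegree = k := by
    rw [Polynomial.natDegree_prod _ _ fun j _ => Polynomial.X_sub_C_ne_zero (r j)]
    simp
  have hPdeg : P.natDegree = k := by rw [hP, natDegree_C_mul hc.ne', hMdeg]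
  have hPk : P.coeff k = c := by
    have h1 := hMon.coeff_natDegree
    rw [hMdeg] at h1
    rw [hP, Polynomial.coeff_C_mul, h1, mul_one]
  have hPeval : ∀ t, P.eval t = c * ∏ j, (t - r j) := by
    intro t; rw [hP]; simp [Polynomial.eval_prod]
  have hProot : ∀ j, P.eval (r j) = 0 := by
    intro j
    rw [hPeval]
    have hz : ∏ m : Fin k, (r j - r m) = 0 :=
      Finset.prod_eq_zero (Finset.mem_univ j) (by ring)
    rw [hz, mul_zero]
  have hDeval : ∀ j, (derivative P).eval (r j)
      = c * ∏ m ∈ Finset.univ.erase j, (r j - r m) := by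
    intro j
    have hsplit : (∏ m : Fin k, (X - Polynomial.C (r m)))
        = (X - Polynomial.C (r j)) * ∏ m ∈ Finset.univ.erase j, (X - Polynomial.C (r m)) :=
      (Finset.mul_prod_erase _ _ (Finset.mem_univ j)).symm
    rw [hP, hsplit, derivative_C_mul, derivative_mul]
    simp only [derivative_sub, derivative_X, derivative_C, sub_zero, one_mul]
    simp [Polynomial.eval_prod]
  have hReval : ∀ t, R.eval t
      = (1 + b*t) * P.eval t + (t - 2*t^2) * (derivative P).eval t := by
    intro t; rw [hR]; simp; ring
  have hR0 : 0 < R.eval 0 := by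
    have h00 : R.eval 0 = P.eval 0 := by rw [hReval]; ring
    have h01 : P.eval 0 = c * ∏ j, (0 - r j) := hPeval 0
    have hp : 0 < ∏ j : Fin k, (0 - r j) :=
      Finset.prod_pos fun j _ => by have := hneg j; linarith
    rw [h00, h01]
    exact mul_pos hc hp
  have hRne : R ≠ 0 := fun h => by rw [h] at hR0; simp at hR0
  have hRr : ∀ j, R.eval (r j)
      = ((r j) - 2*(r j)^2) * c * ∏ m ∈ Finset.univ.erase j, (r j - r m) := by
    intro j; rw [hReval, hProot, hDeval]; ring
  have hsign : ∀ j, (-1:ℝ)^((Finset.Ioi j).card) * R.eval (r j) < 0 := by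
    intro j
    have h1 := prod_erase_sign r hmono j
    have h2 : r j - 2*(r j)^2 < 0 := by nlinarith [hneg j]
    have key : (-1:ℝ)^((Finset.Ioi j).card) * R.eval (r j)
        = ((r j - 2*(r j)^2) * c)
          * ((-1:ℝ)^((Finset.Ioi j).card) * ∏ m ∈ Finset.univ.erase j, (r j - r m)) := by
      rw [hRr]; ring
    rw [key]
    exact mul_neg_of_neg_of_pos (mul_neg_of_neg_of_pos h2 hc) h1
  have hDk : (derivative P).coeff (k-1) = c * k := by
    rw [Polynomial.coeff_derivative, show k - 1 + 1 = k from by omega, hPk]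
    have hcast : ((k - 1 : ℕ) : ℝ) + 1 = (k : ℝ) := by
      rw [Nat.cast_sub hkpos]; push_cast; ring
    rw [hcast]
  have hcoeff : R.coeff (k+1) = (b - 2*k) * c := by
    have hthird : ((X - Polynomial.C 2 * X ^ 2) * derivative P).coeff (k+1)
        = -(2 * (c * k)) := by
      rw [sub_mul, Polynomial.coeff_sub]
      have ha : (X * derivative P).coeff (k+1) = 0 := by
        rw [Polynomial.coeff_X_mul, Polynomial.coeff_derivative,
          Polynomial.coeff_eq_zero_of_natDegree_lt (by rw [hPdeg]; omega), zero_mul]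
      have hbq : (Polynomial.C 2 * X^2 * derivative P).coeff (k+1) = 2 * (c * k) := by
        rw [mul_assoc, Polynomial.coeff_C_mul, show k+1 = (k-1)+2 from by omega,
          Polynomial.coeff_X_pow_mul, hDk]
      rw [ha, hbq]
      ring
    rw [hR, Polynomial.coeff_add, Polynomial.coeff_add,
      Polynomial.coeff_eq_zero_of_natDegree_lt (by rw [hPdeg]; omega),
      Polynomial.coeff_C_mul, Polynomial.coeff_X_mul, hPk, hthird]
    ring
  have hdegle : R.natDegree ≤ k + 1 := by
    rw [hR]
    refine le_trans (Polynomial.natDegree_add_le _ _) ?_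
    rw [max_le_iff]
    constructor
    · refine le_trans (Polynomial.natDegree_add_le _ _) ?_
      rw [max_le_iff]
      constructor
      · rw [hPdeg]; omega
      · refine le_trans (Polynomial.natDegree_C_mul_le _ _) ?_
        refine le_trans Polynomial.natDegree_mul_le ?_
        rw [Polynomial.natDegree_X, hPdeg]
        omega
    · refine le_trans Polynomial.natDegree_mul_le ?_
      have h1 : ((X : Polynomial ℝ) - Polynomial.C 2 * X^2).natDegree ≤ 2 := by
        refine le_trans (Polynomial.natDegree_sub_le _ _) ?_
        rw [max_le_iff]
        refine ⟨by rw [Polynomial.natDegree_X]; omega, ?_⟩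
        refine le_trans (Polynomial.natDegree_C_mul_le _ _) ?_
        rw [Polynomial.natDegree_X_pow]
      have h2 : (derivative P).natDegree ≤ k - 1 := by
        have := Polynomial.natDegree_derivative_le P
        rw [hPdeg] at this
        exact this
      omega
  -- the ladder of k roots above r 0
  have hx : ∀ m : Fin k, ∃ x, r m < x
      ∧ x < (if h : (m:ℕ)+1 < k then r ⟨(m:ℕ)+1, h⟩ else 0) ∧ R.eval x = 0 := by
    intro m
    by_cases h : (m:ℕ)+1 < k
    · have hlt : r m < r ⟨(m:ℕ)+1, h⟩ := hmono (by rw [Fin.lt_def]; simp)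
      set e2 := (Finset.Ioi (⟨(m:ℕ)+1, h⟩ : Fin k)).card with he2
      have hcard1 : (Finset.Ioi m).card = k - 1 - (m:ℕ) := Fin.card_Ioi m
      have hcard2 : e2 = k - 1 - ((m:ℕ)+1) := Fin.card_Ioi _
      have he : (Finset.Ioi m).card = e2 + 1 := by omega
      have s1 := hsign m
      rw [he, pow_succ] at s1
      have s2 := hsign ⟨(m:ℕ)+1, h⟩
      rw [← he2] at s2
      have s1' : 0 < (-1:ℝ)^e2 * R.eval (r m) := by nlinarith [s1]
      have hy : ((-1:ℝ)^e2) * ((-1:ℝ)^e2) = 1 := by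
        rw [← pow_add]
        exact Even.neg_one_pow ⟨e2, rfl⟩
      have hprod : R.eval (r m) * R.eval (r ⟨(m:ℕ)+1, h⟩) < 0 := by
        have hrw : R.eval (r m) * R.eval (r ⟨(m:ℕ)+1, h⟩)
            = ((-1:ℝ)^e2 * R.eval (r m)) * ((-1:ℝ)^e2 * R.eval (r ⟨(m:ℕ)+1, h⟩)) := by
          linear_combination (-(R.eval (r m) * R.eval (r ⟨(m:ℕ)+1, h⟩))) * hy
        rw [hrw]
        exact mul_neg_of_pos_of_neg s1' s2
      rcases exists_root_between hlt hprod with ⟨x, hx1, hx2, hx3⟩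
      exact ⟨x, hx1, by rwa [dif_pos h], hx3⟩
    · have hm0 : (Finset.Ioi m).card = 0 := by
        rw [Fin.card_Ioi]
        have := m.2
        omega
      have s1 := hsign m
      rw [hm0, pow_zero, one_mul] at s1
      have hprod : R.eval (r m) * R.eval 0 < 0 := mul_neg_of_neg_of_pos s1 hR0
      rcases exists_root_between (hneg m) hprod with ⟨x, hx1, hx2, hx3⟩
      exact ⟨x, hx1, by rwa [dif_neg h], hx3⟩
  choose xx hx1 hx2 hx3 using hx
  have hxneg : ∀ m, xx m < 0 := by
    intro m
    have h2 := hx2 m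
    by_cases h : (m:ℕ)+1 < k
    · rw [dif_pos h] at h2; exact h2.trans (hneg _)
    · rwa [dif_neg h] at h2
  have hxmono : StrictMono xx := by
    intro a a' haa
    have h1 : (a:ℕ)+1 < k := by
      have := a'.2
      have := Fin.lt_def.mp haa
      omega
    have h2 : xx a < r ⟨(a:ℕ)+1, h1⟩ := by have := hx2 a; rwa [dif_pos h1] at this
    have h3 : r ⟨(a:ℕ)+1, h1⟩ ≤ r a' := hmono.monotone (by
      rw [Fin.le_def]
      have := Fin.lt_def.mp haa
      simpa using this)
    exact h2.trans_le (h3.trans (hx1 a').le)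
  rcases hb with hb1 | hb2
  · -- b = 2k : the degree does not grow
    have hdegk : R.natDegree ≤ k := by
      rw [Polynomial.natDegree_le_iff_coeff_eq_zero]
      intro N hN
      by_cases hN1 : N = k+1
      · rw [hN1, hcoeff, hb1]
        ring
      · exact Polynomial.coeff_eq_zero_of_natDegree_lt (by omega)
    have hfac := factor_of_roots xx hxmono.injective hx3 hRne hdegk
    have hlc : 0 < R.leadingCoeff := lead_pos_of_eval_zero_pos hxneg hfac.2 hR0
    exact ⟨k, R.leadingCoeff, xx, hlc, hxmono, hxneg, Or.inl ⟨hb1, rfl⟩, hfac.2⟩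
  · -- 2k+1 ≤ b : one more root at the bottom
    have hlcval : R.coeff (k+1) ≠ 0 := by
      rw [hcoeff]
      have : (0:ℝ) < (b - 2*k) * c := mul_pos (by linarith) hc
      exact this.ne'
    have hdegk : R.natDegree = k + 1 :=
      le_antisymm hdegle (Polynomial.le_natDegree_of_ne_zero hlcval)
    have hlead : R.leadingCoeff = (b - 2*k)*c := by
      rw [Polynomial.leadingCoeff, hdegk, hcoeff]
    have hleadpos : 0 < R.leadingCoeff := by
      rw [hlead]; exact mul_pos (by linarith) hc
    set j0 : Fin k := ⟨0, hkpos⟩ with hj0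
    have hbot : ∃ u, u < r j0 ∧ 0 < (-1:ℝ)^(k+1) * R.eval u := by
      set S := Polynomial.C ((-1:ℝ)^(k+1)) * R.comp (-X) with hS
      have hdegneg : (-X : Polynomial ℝ).natDegree = 1 := by simp
      have hSdeg2 : (R.comp (-X)).natDegree = k+1 := by
        rw [Polynomial.natDegree_comp, hdegneg, hdegk, mul_one]
      have hsq : ((-1:ℝ)^(k+1)) * ((-1:ℝ)^(k+1)) = 1 := by
        rw [← pow_add]; exact Even.neg_one_pow ⟨k+1, rfl⟩
      have hSlc : S.leadingCoeff = (b - 2*k)*c := by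
        have h1 : S.leadingCoeff
            = ((-1:ℝ)^(k+1)) * (R.leadingCoeff * ((-X : Polynomial ℝ).leadingCoeff)^(R.natDegree)) := by
          rw [hS, Polynomial.leadingCoeff_mul, Polynomial.leadingCoeff_C,
            Polynomial.leadingCoeff_comp (by rw [hdegneg]; omega)]
        have h2 : ((-X : Polynomial ℝ).leadingCoeff) = -1 := by
          rw [Polynomial.leadingCoeff_neg, Polynomial.leadingCoeff_X]
        rw [h1, h2, hdegk, hlead]
        linear_combination ((b-2*k)*c) * hsq
      have hSnd : S.natDegree = k+1 := by
        rw [hS, natDegree_C_mul (pow_ne_zero _ (by norm_num : (-1:ℝ) ≠ 0)), hSdeg2]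
      have hSdeg : 0 < S.degree := by
        rw [← Polynomial.natDegree_pos_iff_degree_pos, hSnd]
        omega
      have htend := Polynomial.tendsto_atTop_of_leadingCoeff_nonneg S hSdeg
        (by rw [hSlc]; exact (mul_pos (by linarith) hc).le)
      have hev := (htend.eventually_gt_atTop 0).and (Filter.eventually_gt_atTop (-(r j0)))
      rcases hev.exists with ⟨t, ht1, ht2⟩
      refine ⟨-t, by linarith, ?_⟩
      have hevalS : Polynomial.eval t S = (-1:ℝ)^(k+1) * R.eval (-t) := by
        rw [hS, Polynomial.eval_mul, Polynomial.eval_C, Polynomial.eval_comp]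
        simp
      rw [← hevalS]
      exact ht1
    rcases hbot with ⟨u, hu1, hu2⟩
    have hj0card : (Finset.Ioi j0).card = k - 1 := by
      rw [Fin.card_Ioi]
      simp [hj0]
    have s0 := hsign j0
    rw [hj0card] at s0
    have hpow : ((-1:ℝ))^(k+1) = ((-1:ℝ))^(k-1) := by
      rw [show k+1 = (k-1)+2 from by omega, pow_add]
      norm_num
    rw [hpow] at hu2
    have hysq : ((-1:ℝ)^(k-1)) * ((-1:ℝ)^(k-1)) = 1 := by
      rw [← pow_add]; exact Even.neg_one_pow ⟨k-1, rfl⟩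
    have hprod0 : R.eval u * R.eval (r j0) < 0 := by
      have hrw : R.eval u * R.eval (r j0)
          = ((-1:ℝ)^(k-1) * R.eval u) * ((-1:ℝ)^(k-1) * R.eval (r j0)) := by
        linear_combination (-(R.eval u * R.eval (r j0))) * hysq
      rw [hrw]
      exact mul_neg_of_pos_of_neg hu2 s0
    rcases exists_root_between hu1 hprod0 with ⟨u0, hu01, hu02, hu03⟩
    set yy : Fin (k+1) → ℝ :=
      fun j => if h0 : (j:ℕ) = 0 then u0 else xx ⟨(j:ℕ)-1, by have := j.2; omega⟩ with hyy
    have hyy0 : ∀ (j : Fin (k+1)), (j:ℕ) = 0 → yy j = u0 := fun j h0 => dif_pos h0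
    have hyys : ∀ (j : Fin (k+1)) (h0 : ¬ (j:ℕ) = 0),
        yy j = xx ⟨(j:ℕ)-1, by have := j.2; omega⟩ := fun j h0 => dif_neg h0
    have hyroot : ∀ j, R.eval (yy j) = 0 := by
      intro j
      by_cases h0 : (j:ℕ) = 0
      · rw [hyy0 j h0]; exact hu03
      · rw [hyys j h0]; exact hx3 _
    have hyneg : ∀ j, yy j < 0 := by
      intro j
      by_cases h0 : (j:ℕ) = 0
      · rw [hyy0 j h0]; exact hu02.trans (hneg j0)
      · rw [hyys j h0]; exact hxneg _
    have hymono : StrictMono yy := by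
      intro a a' haa
      have hlt := Fin.lt_def.mp haa
      have h0' : ¬ (a':ℕ) = 0 := by omega
      by_cases h0 : (a:ℕ) = 0
      · rw [hyy0 a h0, hyys a' h0']
        have hle : r j0 ≤ r ⟨(a':ℕ)-1, by have := a'.2; omega⟩ := by
          apply hmono.monotone
          rw [Fin.le_def]
          simp [hj0]
        exact hu02.trans_le (hle.trans (hx1 _).le)
      · rw [hyys a h0, hyys a' h0']
        apply hxmono
        rw [Fin.lt_def]
        simp only []
        omega
    have hfac := factor_of_roots yy hymono.injective hyroot hRne (le_of_eq hdegk)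
    exact ⟨k+1, R.leadingCoeff, yy, hleadpos, hymono, hyneg, Or.inr ⟨hb2, rfl⟩, hfac.2⟩


end Step


lemma Q_rooted : ∀ n : ℕ, 1 ≤ n → ∃ (k : ℕ) (c : ℝ) (r : Fin k → ℝ),
    0 < c ∧ StrictMono r ∧ (∀ j, r j < 0) ∧ 2*k ≤ n - 1 ∧
    Q n = Polynomial.C c * ∏ j, (X - Polynomial.C (r j)) := by
  intro n
  induction n with
  | zero => intro h; omega
  | succ m ih =>
    intro _
    rcases Nat.eq_zero_or_pos m with hm0 | hm1
    · subst hm0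
      refine ⟨0, 1, Fin.elim0, one_pos, fun a => a.elim0, fun a => a.elim0, by omega, ?_⟩
      rw [Q_one]
      simp
    · rcases ih hm1 with ⟨k, c, r, hc, hmono, hneg, hdeg, hQ⟩
      have hb : ((m:ℝ) - 1) = 2*k ∨ 2*k + 1 ≤ ((m:ℝ) - 1) := by
        rcases Nat.lt_or_ge (2*k) (m-1) with h | h
        · right
          have h1 : (2*k+1 : ℕ) ≤ m - 1 := h
          have h2 := (Nat.cast_le (α := ℝ)).mpr h1
          push_cast [Nat.cast_sub hm1] at h2 ⊢
          linarith
        · left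
          have h1 : m = 2*k+1 := by omega
          have h2 : (m:ℝ) = 2*(k:ℝ)+1 := by exact_mod_cast h1
          linarith
      rcases interlace_step k c ((m:ℝ)-1) hc r hmono hneg hb (Q m) (Q (m+1)) hQ (Q_rec hm1) with
        ⟨k', c', r', hc', hmono', hneg', hcase, hfac⟩
      refine ⟨k', c', r', hc', hmono', hneg', ?_, hfac⟩
      rcases hcase with ⟨hbe, hk'⟩ | ⟨hbe, hk'⟩
      · have h1 : (m:ℝ) = 2*(k:ℝ)+1 := by linarith
        have h2 : m = 2*k+1 := by exact_mod_cast h1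
        omega
      · have h1 : ((2*k+2 : ℕ) : ℝ) ≤ (m:ℝ) := by push_cast; linarith
        have h2 := (Nat.cast_le (α := ℝ)).mp h1
        omega


section Prob

lemma derivative_finset_prod {ι : Type} [DecidableEq ι] (s : Finset ι) (f : ι → Polynomial ℝ) :
    Polynomial.derivative (∏ i ∈ s, f i)
      = ∑ i ∈ s, (∏ j ∈ s.erase i, f j) * Polynomial.derivative (f i) := by
  rw [Finset.prod_eq_multiset_prod, Polynomial.derivative_prod]
  rfl

lemma eval_Q (N : ℕ) (u : ℝ) :
    (Q N).eval u = ∑ T : LemniscateTree N, u ^ (outdegTwoCount T) := by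
  rw [Q, Polynomial.eval_finset_sum]
  simp

lemma eval_Q_one (N : ℕ) :
    (Q N).eval 1 = (Fintype.card (LemniscateTree N) : ℝ) := by
  rw [eval_Q]
  simp [Finset.card_univ]

lemma eval_derivative_Q_one (N : ℕ) :
    (Polynomial.derivative (Q N)).eval 1 = ∑ T : LemniscateTree N, (outdegTwoCount T : ℝ) := by
  rw [Q, map_sum Polynomial.derivative, Polynomial.eval_finset_sum]
  refine Finset.sum_congr rfl fun T _ => ?_
  rw [Polynomial.derivative_X_pow]
  simp

lemma derivative_eval_prod {k : ℕ} (r : Fin k → ℝ) (t : ℝ) :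
    (Polynomial.derivative (∏ j : Fin k, (X - Polynomial.C (r j)))).eval t
      = ∑ j : Fin k, ∏ m ∈ Finset.univ.erase j, (t - r m) := by
  rw [derivative_finset_prod, Polynomial.eval_finset_sum]
  refine Finset.sum_congr rfl fun j _ => ?_
  rw [Polynomial.eval_mul]
  have hder : Polynomial.derivative (X - Polynomial.C (r j)) = 1 := by simp
  rw [hder, Polynomial.eval_one, mul_one, Polynomial.eval_prod]
  refine Finset.prod_congr rfl fun m _ => by simp

lemma exp_quad {x : ℝ} (h : |x| ≤ 1) : Real.exp x - 1 - x ≤ x^2 := by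
  have hb := Real.exp_bound h (n := 2) (by norm_num)
  have hsum : ∑ m ∈ Finset.range 2, x^m / (Nat.factorial m : ℝ) = 1 + x := by
    rw [Finset.sum_range_succ, Finset.sum_range_one]
    norm_num
  rw [hsum] at hb
  norm_num at hb
  have h1 : Real.exp x - (1+x) ≤ |Real.exp x - (1+x)| := le_abs_self _
  have h2 : |x|^2 = x^2 := sq_abs x
  nlinarith [sq_nonneg x]

end Prob


section Main

open scoped Classical

set_option maxHeartbeats 1600000 in
lemma dev_bound (α : ℝ) (N : ℕ) (hN : 1 ≤ N) (hα2 : α + 1/2 ≤ 1) :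
    devProb N α ≤ 2 * Real.exp (-((N:ℝ) ^ (2*α)) / 4) := by
  obtain ⟨k, c, r, hc, hmono, hneg, hdeg, hQf⟩ := Q_rooted N hN
  have hNpos : (0:ℝ) < N := by exact_mod_cast hN
  have hN1 : (1:ℝ) ≤ N := by exact_mod_cast hN
  set p : Fin k → ℝ := fun j => 1/(1 - r j) with hp
  have h1r : ∀ j, 0 < 1 - r j := fun j => by have := hneg j; linarith
  have hp0 : ∀ j, 0 < p j := fun j => by have := h1r j; rw [hp]; positivity
  have hp1 : ∀ j, p j ≤ 1 := fun j => by
    rw [hp]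
    rw [div_le_one (h1r j)]
    have := hneg j; linarith
  set μ := lemMean N with hμdef
  set cardR : ℝ := (Fintype.card (LemniscateTree N) : ℝ) with hcardR
  have hprodpos : 0 < ∏ j, (1 - r j) := Finset.prod_pos fun j _ => h1r j
  have hcard : cardR = c * ∏ j, (1 - r j) := by
    rw [hcardR, ← eval_Q_one, hQf]
    simp [Polynomial.eval_prod]
  have hcardpos : 0 < cardR := by rw [hcard]; exact mul_pos hc hprodpos
  have hsum : ∑ T : LemniscateTree N, (outdegTwoCount T : ℝ)
      = c * ∑ j, ∏ m ∈ Finset.univ.erase j, (1 - r m) := by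
    rw [← eval_derivative_Q_one, hQf, Polynomial.derivative_C_mul, Polynomial.eval_mul,
      Polynomial.eval_C, derivative_eval_prod]
  have herase : ∀ j, ∏ m ∈ Finset.univ.erase j, (1 - r m) = p j * ∏ m, (1 - r m) := by
    intro j
    have h := Finset.mul_prod_erase Finset.univ (fun m => 1 - r m) (Finset.mem_univ j)
    rw [← h, hp]
    have := h1r j
    field_simp
  have hμ : μ = ∑ j, p j := by
    rw [hμdef, lemMean, hsum, ← hcardR, hcard]
    rw [Finset.sum_congr rfl fun j _ => herase j, ← Finset.sum_mul]
    rw [div_eq_iff (by positivity)]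
    ring
  have hμ0 : 0 ≤ μ := by
    rw [hμ]; exact Finset.sum_nonneg fun j _ => (hp0 j).le
  have hμN : μ ≤ N := by
    rw [hμ]
    calc ∑ j, p j ≤ ∑ _j : Fin k, (1:ℝ) := Finset.sum_le_sum fun j _ => hp1 j
      _ = k := by simp
      _ ≤ N := by exact_mod_cast (by omega : k ≤ N)
  have hmgf : ∀ u : ℝ, 0 < u → (Q N).eval u ≤ cardR * Real.exp (μ * (u - 1)) := by
    intro u hu
    have heval : (Q N).eval u = c * ∏ j, (u - r j) := by
      rw [hQf]; simp [Polynomial.eval_prod]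
    have hfac : ∀ j : Fin k, u - r j ≤ (1 - r j) * Real.exp (p j * (u - 1)) := by
      intro j
      have h1 := h1r j
      have hident : u - r j = (1 - r j) * (1 + p j * (u - 1)) := by
        rw [hp]
        field_simp
        ring
      rw [hident]
      have h2 := Real.add_one_le_exp (p j * (u-1))
      nlinarith
    have hnn : ∀ j : Fin k, 0 ≤ u - r j := fun j => by have := hneg j; linarith
    calc (Q N).eval u = c * ∏ j, (u - r j) := heval
      _ ≤ c * ∏ j, ((1 - r j) * Real.exp (p j * (u - 1))) := by
          apply mul_le_mul_of_nonneg_left _ hc.le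
          exact Finset.prod_le_prod (fun j _ => hnn j) (fun j _ => hfac j)
      _ = cardR * Real.exp (μ * (u - 1)) := by
          rw [Finset.prod_mul_distrib, hcard, hμ, ← Real.exp_sum, Finset.sum_mul]
          ring
  set t : ℝ := (N:ℝ) ^ (α + 1/2) with ht
  have ht0 : 0 < t := Real.rpow_pos_of_pos hNpos _
  have htN : t ≤ N := by
    calc t ≤ (N:ℝ) ^ (1:ℝ) := Real.rpow_le_rpow_of_exponent_le hN1 hα2
      _ = N := Real.rpow_one _
  set lam : ℝ := t / (2*N) with hlam
  have hlam0 : 0 < lam := by rw [hlam]; positivity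
  have hlam1 : lam ≤ 1 := by
    rw [hlam, div_le_one (by positivity)]
    linarith
  have ht2 : t^2 = (N:ℝ)^(2*α) * N := by
    rw [ht, sq, ← Real.rpow_add hNpos,
      show (α + 1/2) + (α + 1/2) = 2*α + 1 from by ring,
      Real.rpow_add hNpos, Real.rpow_one]
  have hkey : N * lam^2 - lam * t = -((N:ℝ)^(2*α))/4 := by
    have hNne : (N:ℝ) ≠ 0 := ne_of_gt hNpos
    have h1 : (N:ℝ) * lam^2 = t^2/(4*N) := by rw [hlam]; field_simp; ring
    have h2 : lam * t = t^2/(2*N) := by rw [hlam]; field_simp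
    rw [h1, h2, ht2]
    field_simp
    ring
  -- upper tail
  set Ap := Finset.univ.filter (fun T : LemniscateTree N => μ + t < (outdegTwoCount T : ℝ))
    with hApdef
  have hApb : (Ap.card : ℝ) * Real.exp (lam * (μ + t)) ≤ (Q N).eval (Real.exp lam) := by
    rw [eval_Q]
    have hterm : ∀ T ∈ Ap, Real.exp (lam * (μ + t)) ≤ (Real.exp lam) ^ (outdegTwoCount T) := by
      intro T hT
      rw [← Real.exp_nat_mul]
      apply Real.exp_le_exp.mpr
      have hmem := (Finset.mem_filter.mp hT).2
      nlinarith [hlam0]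
    calc (Ap.card : ℝ) * Real.exp (lam * (μ + t))
        = ∑ _T ∈ Ap, Real.exp (lam * (μ + t)) := by
          rw [Finset.sum_const, nsmul_eq_mul]
      _ ≤ ∑ T ∈ Ap, (Real.exp lam) ^ (outdegTwoCount T) := Finset.sum_le_sum hterm
      _ ≤ ∑ T : LemniscateTree N, (Real.exp lam) ^ (outdegTwoCount T) :=
          Finset.sum_le_sum_of_subset_of_nonneg (Finset.filter_subset _ _)
            (fun T _ _ => by positivity)
  have hupper : (Ap.card : ℝ) ≤ cardR * Real.exp (-((N:ℝ)^(2*α))/4) := by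
    have h1 := hApb.trans (hmgf _ (Real.exp_pos lam))
    have hE : 0 < Real.exp (lam * (μ + t)) := Real.exp_pos _
    have h2 : (Ap.card : ℝ)
        ≤ cardR * Real.exp (μ * (Real.exp lam - 1) - lam * (μ + t)) := by
      rw [Real.exp_sub, ← mul_div_assoc]
      rw [le_div_iff₀ hE]
      exact h1
    refine h2.trans ?_
    apply mul_le_mul_of_nonneg_left _ hcardpos.le
    apply Real.exp_le_exp.mpr
    have hq := exp_quad (x := lam) (by rw [abs_of_pos hlam0]; exact hlam1)
    have h3 : μ * (Real.exp lam - 1 - lam) ≤ (N:ℝ) * lam^2 :=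
      calc μ * (Real.exp lam - 1 - lam) ≤ μ * lam^2 := by
            apply mul_le_mul_of_nonneg_left hq hμ0
        _ ≤ (N:ℝ) * lam^2 := mul_le_mul_of_nonneg_right hμN (sq_nonneg lam)
    linarith [hkey, h3]
  -- lower tail
  set Am := Finset.univ.filter (fun T : LemniscateTree N => (outdegTwoCount T : ℝ) < μ - t)
    with hAmdef
  have hAmb : (Am.card : ℝ) * Real.exp (-lam * (μ - t)) ≤ (Q N).eval (Real.exp (-lam)) := by
    rw [eval_Q]
    have hterm : ∀ T ∈ Am, Real.exp (-lam * (μ - t)) ≤ (Real.exp (-lam)) ^ (outdegTwoCount T) := by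
      intro T hT
      rw [← Real.exp_nat_mul]
      apply Real.exp_le_exp.mpr
      have hmem := (Finset.mem_filter.mp hT).2
      nlinarith [hlam0]
    calc (Am.card : ℝ) * Real.exp (-lam * (μ - t))
        = ∑ _T ∈ Am, Real.exp (-lam * (μ - t)) := by
          rw [Finset.sum_const, nsmul_eq_mul]
      _ ≤ ∑ T ∈ Am, (Real.exp (-lam)) ^ (outdegTwoCount T) := Finset.sum_le_sum hterm
      _ ≤ ∑ T : LemniscateTree N, (Real.exp (-lam)) ^ (outdegTwoCount T) :=
          Finset.sum_le_sum_of_subset_of_nonneg (Finset.filter_subset _ _)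
            (fun T _ _ => by positivity)
  have hlower : (Am.card : ℝ) ≤ cardR * Real.exp (-((N:ℝ)^(2*α))/4) := by
    have h1 := hAmb.trans (hmgf _ (Real.exp_pos (-lam)))
    have hE : 0 < Real.exp (-lam * (μ - t)) := Real.exp_pos _
    have h2 : (Am.card : ℝ)
        ≤ cardR * Real.exp (μ * (Real.exp (-lam) - 1) - (-lam * (μ - t))) := by
      rw [Real.exp_sub, ← mul_div_assoc]
      rw [le_div_iff₀ hE]
      exact h1
    refine h2.trans ?_
    apply mul_le_mul_of_nonneg_left _ hcardpos.le
    apply Real.exp_le_exp.mpr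
    have hq := exp_quad (x := -lam) (by rw [abs_of_neg (by linarith)]; linarith)
    have hq' : Real.exp (-lam) - 1 + lam ≤ lam^2 := by
      rw [neg_sq] at hq
      linarith [hq]
    have h3 : μ * (Real.exp (-lam) - 1 + lam) ≤ (N:ℝ) * lam^2 :=
      calc μ * (Real.exp (-lam) - 1 + lam) ≤ μ * lam^2 := by
            apply mul_le_mul_of_nonneg_left hq' hμ0
        _ ≤ (N:ℝ) * lam^2 := mul_le_mul_of_nonneg_right hμN (sq_nonneg lam)
    linarith [hkey, h3]
  -- combining
  have hsub : (Finset.univ.filter fun T : LemniscateTree N =>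
      (N : ℝ) ^ (α + 1 / 2) < |(outdegTwoCount T : ℝ) - lemMean N|) ⊆ Ap ∪ Am := by
    intro T hT
    have hT2 := (Finset.mem_filter.mp hT).2
    rw [← hμdef, ← ht] at hT2
    rw [Finset.mem_union, hApdef, hAmdef, Finset.mem_filter, Finset.mem_filter]
    rcases lt_abs.mp hT2 with h | h
    · left; exact ⟨Finset.mem_univ _, by linarith⟩
    · right; exact ⟨Finset.mem_univ _, by linarith⟩
  have hnum : (((Finset.univ.filter fun T : LemniscateTree N =>
        (N : ℝ) ^ (α + 1 / 2) < |(outdegTwoCount T : ℝ) - lemMean N|).card : ℕ) : ℝ)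
      ≤ (Ap.card : ℝ) + (Am.card : ℝ) := by
    have h1 := Finset.card_le_card hsub
    have h2 := Finset.card_union_le Ap Am
    exact_mod_cast le_trans h1 h2
  unfold devProb
  rw [← hcardR, div_le_iff₀ hcardpos]
  calc (((Finset.univ.filter fun T : LemniscateTree N =>
        (N : ℝ) ^ (α + 1 / 2) < |(outdegTwoCount T : ℝ) - lemMean N|).card : ℕ) : ℝ)
      ≤ (Ap.card : ℝ) + (Am.card : ℝ) := hnum
    _ ≤ cardR * Real.exp (-((N:ℝ)^(2*α))/4) + cardR * Real.exp (-((N:ℝ)^(2*α))/4) :=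
        add_le_add hupper hlower
    _ = 2 * Real.exp (-((N:ℝ)^(2*α))/4) * cardR := by ring

end Main

end LemConc


/-- for `0 < α < 1/2`,
`P(|X_N − μ_N| > N^{α+1/2}) = O(N^{α−1/2})`; in particular it tends to `0`. -/
theorem outdegTwo_concentration (α : ℝ) (hα0 : 0 < α) (hα : α < 1 / 2) :
    (∃ C : ℝ, 0 < C ∧ ∀ N : ℕ, 1 ≤ N →
        devProb N α ≤ C * (N : ℝ) ^ (α - 1 / 2)) ∧
    Filter.Tendsto (fun N : ℕ => devProb N α) Filter.atTop (nhds 0) := by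
  have h2a : (0:ℝ) < 2*α := by linarith
  set m : ℕ := ⌈1/(2*α)⌉₊ + 1 with hm
  have hm1 : 1 ≤ m := by omega
  have hmge : 1/(2*α) ≤ (m:ℝ) := by
    have h := Nat.le_ceil (1/(2*α))
    have h2 : ((⌈1/(2*α)⌉₊ : ℕ) : ℝ) ≤ (m:ℝ) := by
      rw [hm]; push_cast; linarith
    linarith
  have h2am : 1 ≤ 2*α*(m:ℝ) := by
    rw [div_le_iff₀ h2a] at hmge
    linarith
  set C : ℝ := 2 * (4*(m:ℝ))^m with hC
  have hCpos : 0 < C := by rw [hC]; positivity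
  have hbound : ∀ N : ℕ, 1 ≤ N → devProb N α ≤ C * (N:ℝ)^(α - 1/2) := by
    intro N hN
    have hNpos : (0:ℝ) < N := by exact_mod_cast hN
    have hN1 : (1:ℝ) ≤ N := by exact_mod_cast hN
    have h1 := LemConc.dev_bound α N hN (by linarith)
    set y := (N:ℝ)^(2*α) with hy
    have hypos : 0 < y := Real.rpow_pos_of_pos hNpos _
    have h4m : (0:ℝ) < 4*(m:ℝ) := by positivity
    have hkey : y^m ≤ (4*(m:ℝ))^m * Real.exp (y/4) := by
      have hz : y/(4*(m:ℝ)) ≤ Real.exp (y/(4*(m:ℝ))) := by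
        have := Real.add_one_le_exp (y/(4*(m:ℝ)))
        linarith
      have hy4 : y ≤ (4*(m:ℝ)) * Real.exp (y/(4*(m:ℝ))) := by
        calc y = (4*(m:ℝ)) * (y/(4*(m:ℝ))) := by field_simp
          _ ≤ (4*(m:ℝ)) * Real.exp (y/(4*(m:ℝ))) := by
              exact mul_le_mul_of_nonneg_left hz h4m.le
      calc y^m ≤ ((4*(m:ℝ)) * Real.exp (y/(4*(m:ℝ))))^m :=
            pow_le_pow_left₀ hypos.le hy4 m
        _ = (4*(m:ℝ))^m * (Real.exp (y/(4*(m:ℝ))))^m := mul_pow _ _ _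
        _ = (4*(m:ℝ))^m * Real.exp (y/4) := by
            rw [← Real.exp_nat_mul]
            congr 1
            have hmne : (m:ℝ) ≠ 0 := by positivity
            field_simp
    have hexp : Real.exp (-y/4) * y^m ≤ (4*(m:ℝ))^m := by
      calc Real.exp (-y/4) * y^m
          ≤ Real.exp (-y/4) * ((4*(m:ℝ))^m * Real.exp (y/4)) :=
            mul_le_mul_of_nonneg_left hkey (Real.exp_pos _).le
        _ = (4*(m:ℝ))^m * (Real.exp (-y/4) * Real.exp (y/4)) := by ring
        _ = (4*(m:ℝ))^m := by
            rw [← Real.exp_add, show -y/4 + y/4 = 0 from by ring, Real.exp_zero, mul_one]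
    have hexp2 : Real.exp (-y/4) ≤ (4*(m:ℝ))^m / y^m := by
      rw [le_div_iff₀ (by positivity)]
      exact hexp
    have hym : y^m = (N:ℝ)^(2*α*(m:ℕ)) := by
      rw [hy, ← Real.rpow_natCast ((N:ℝ)^(2*α)) m, ← Real.rpow_mul hNpos.le]
    have hmono2 : (N:ℝ)^((1:ℝ)/2 - α) ≤ y^m := by
      rw [hym]
      apply Real.rpow_le_rpow_of_exponent_le hN1
      linarith
    have hNar : (N:ℝ)^(α - 1/2) = 1 / (N:ℝ)^((1:ℝ)/2 - α) := by
      rw [show α - 1/2 = -((1:ℝ)/2 - α) from by ring, Real.rpow_neg hNpos.le]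
      exact (one_div _).symm
    have hNhalf : (0:ℝ) < (N:ℝ)^((1:ℝ)/2 - α) := Real.rpow_pos_of_pos hNpos _
    calc devProb N α ≤ 2 * Real.exp (-y/4) := h1
      _ ≤ 2 * ((4*(m:ℝ))^m / y^m) := by linarith [hexp2]
      _ ≤ 2 * ((4*(m:ℝ))^m / (N:ℝ)^((1:ℝ)/2 - α)) := by
          have := div_le_div_of_nonneg_left (by positivity : (0:ℝ) ≤ (4*(m:ℝ))^m)
            hNhalf hmono2
          linarith
      _ = C * (N:ℝ)^(α - 1/2) := by
          rw [hC, hNar]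
          ring
  refine ⟨⟨C, hCpos, hbound⟩, ?_⟩
  have h0 : Filter.Tendsto (fun N : ℕ => C * (N:ℝ)^(α - 1/2)) Filter.atTop (nhds 0) := by
    have h1 : Filter.Tendsto (fun x : ℝ => x^(-(1/2 - α))) Filter.atTop (nhds 0) :=
      tendsto_rpow_neg_atTop (by linarith)
    have h2 := (h1.comp (tendsto_natCast_atTop_atTop (R := ℝ))).const_mul C
    rw [mul_zero] at h2
    convert h2 using 2 with N
    rw [Function.comp_apply]
    congr 1
    ring
  refine tendsto_of_tendsto_of_tendsto_of_le_of_le' tendsto_const_nhds h0 ?_ ?_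
  · exact Filter.Eventually.of_forall fun N => by
      unfold devProb
      positivity
  · filter_upwards [Filter.eventually_ge_atTop 1] with N hN
    exact hbound N hN
end

section
/- Let ρ(u) = (2/√(1−2u))·artanh(√(1−2u)) (analytic near u = 1, with ρ(1) = π/2) and set β(u) = (π/2)/ρ(u), so β(1) = 1. Then β'(1) = 1 − 2/π and β''(1) = 8/π² − 1, and consequently the variability constant v(β) := β''(1)/β(1) + β'(1)/β(1) − (β'(1)/β(1))² equals 4/π² + 2/π − 1, which is nonzero. -/
open Complex Filter

set_option maxHeartbeats 1000000 in
/-- if `ρ` is analytic near `u = 1` with `ρ(1) = π/2` and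
`ρ(u) = (2/√(1−2u))·artanh(√(1−2u)) = (1/√(1−2u))·log((1+√(1−2u))/(1−√(1−2u)))`
(for a square root `s` of `1−2u`), then with `β(u) = (π/2)/ρ(u)` one has
`β(1) = 1`, `β'(1) = 1 − 2/π`, `β''(1) = 8/π² − 1`, and the variability constant
`v(β) = β''(1)/β(1) + β'(1)/β(1) − (β'(1)/β(1))²` equals `4/π² + 2/π − 1 ≠ 0`. -/
theorem variability_constant (ε : ℝ) (hε : 0 < ε) (ρ : ℂ → ℂ)
    (hρan : AnalyticOnNhd ℂ ρ (Metric.ball (1 : ℂ) ε))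
    (hρ1 : ρ 1 = (Real.pi : ℂ) / 2)
    (hρform : ∀ u ∈ Metric.ball (1 : ℂ) ε, ∃ s : ℂ, s ^ 2 = 1 - 2 * u ∧ s ≠ 0 ∧
      ρ u = s⁻¹ * Complex.log ((1 + s) / (1 - s))) :
    (fun u : ℂ => ((Real.pi : ℂ) / 2) / ρ u) 1 = 1 ∧
    deriv (fun u : ℂ => ((Real.pi : ℂ) / 2) / ρ u) 1 = 1 - 2 / (Real.pi : ℂ) ∧
    deriv (deriv (fun u : ℂ => ((Real.pi : ℂ) / 2) / ρ u)) 1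
      = 8 / (Real.pi : ℂ) ^ 2 - 1 ∧
    deriv (deriv (fun u : ℂ => ((Real.pi : ℂ) / 2) / ρ u)) 1
          / (fun u : ℂ => ((Real.pi : ℂ) / 2) / ρ u) 1
        + deriv (fun u : ℂ => ((Real.pi : ℂ) / 2) / ρ u) 1
          / (fun u : ℂ => ((Real.pi : ℂ) / 2) / ρ u) 1
        - (deriv (fun u : ℂ => ((Real.pi : ℂ) / 2) / ρ u) 1
          / (fun u : ℂ => ((Real.pi : ℂ) / 2) / ρ u) 1) ^ 2
      = 4 / (Real.pi : ℂ) ^ 2 + 2 / (Real.pi : ℂ) - 1 ∧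
    (4 / Real.pi ^ 2 + 2 / Real.pi - 1 : ℝ) ≠ 0 := by
  have hπ : (0:ℝ) < Real.pi := Real.pi_pos
  set p : ℂ := (Real.pi : ℂ) with hp
  have hp0 : p ≠ 0 := by
    simp [hp, Complex.ofReal_ne_zero, Real.pi_ne_zero]
  have h1mem : (1:ℂ) ∈ Metric.ball (1:ℂ) ε := by simpa using hε
  set h : ℂ → ℂ := fun u => (1 - 2*u) * ρ u ^ 2 with hh
  set w : ℂ → ℂ := fun u => I * Complex.exp (Complex.log (-h u) / 2) with hw
  set d1 : ℂ := deriv ρ 1 with hd1def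
  set d2 : ℂ := deriv (deriv ρ) 1 with hd2def
  have hh1 : h 1 = -(p^2/4) := by
    simp only [hh]; rw [hρ1]; ring
  have hh1' : -h 1 = ((Real.pi^2/4 : ℝ) : ℂ) := by rw [hh1]; push_cast; ring
  -- neighborhood facts
  have hρcont : ContinuousAt ρ 1 := (hρan 1 h1mem).continuousAt
  have hhcont : ContinuousAt h 1 :=
    (continuousAt_const.sub (continuousAt_const.mul continuousAt_id)).mul (hρcont.pow 2)
  have hrecont : ContinuousAt (fun u => (-h u).re) 1 :=
    Complex.continuous_re.continuousAt.comp hhcont.neg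
  have hre1 : (0:ℝ) < (-h 1).re := by
    rw [hh1', Complex.ofReal_re]; positivity
  have hρre1 : (0:ℝ) < (ρ 1).re := by
    have : ρ 1 = ((Real.pi/2 : ℝ) : ℂ) := by rw [hρ1]; push_cast; ring
    rw [this, Complex.ofReal_re]; positivity
  have hρrecont : ContinuousAt (fun u => (ρ u).re) 1 :=
    Complex.continuous_re.continuousAt.comp hρcont
  have hP : ∀ᶠ u in nhds (1:ℂ), u ∈ Metric.ball (1:ℂ) ε ∧ 0 < (-h u).re ∧ u ≠ 0
      ∧ 0 < (ρ u).re := by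
    have e1 : ∀ᶠ u in nhds (1:ℂ), u ∈ Metric.ball (1:ℂ) ε :=
      Metric.isOpen_ball.eventually_mem h1mem
    have e2 : ∀ᶠ u in nhds (1:ℂ), 0 < (-h u).re :=
      hrecont.eventually (eventually_gt_nhds hre1)
    have e3 : ∀ᶠ u in nhds (1:ℂ), u ≠ 0 := eventually_ne_nhds (by norm_num)
    have e4 : ∀ᶠ u in nhds (1:ℂ), 0 < (ρ u).re :=
      hρrecont.eventually (eventually_gt_nhds hρre1)
    filter_upwards [e1, e2, e3, e4] with u h1 h2 h3 h4 using ⟨h1, h2, h3, h4⟩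
  have hhne : ∀ u : ℂ, 0 < (-h u).re → -h u ≠ 0 := by
    intro u hu h0
    rw [h0] at hu; simp at hu
  have hρne : ∀ u : ℂ, 0 < (ρ u).re → ρ u ≠ 0 := by
    intro u hu h0
    rw [h0] at hu; simp at hu
  -- functional equation : cosh (w u) = (1-u)/u near 1
  have hfun : ∀ u : ℂ, u ∈ Metric.ball (1:ℂ) ε → 0 < (-h u).re → u ≠ 0 →
      Complex.cosh (w u) = (1 - u)/u := by
    intro u hu hre hu0
    obtain ⟨s, hs, hs0, hρu⟩ := hρform u hu
    have hs1 : (1:ℂ) - s ≠ 0 := by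
      intro h0
      have hse : s = 1 := by linear_combination -h0
      rw [hse] at hs
      exact hu0 (by linear_combination hs/2)
    have hs2 : (1:ℂ) + s ≠ 0 := by
      intro h0
      have hse : s = -1 := by linear_combination h0
      rw [hse] at hs
      exact hu0 (by linear_combination hs/2)
    have hv : (1 + s)/(1 - s) ≠ 0 := div_ne_zero hs2 hs1
    have hsρ : s * ρ u = Complex.log ((1 + s)/(1 - s)) := by
      rw [hρu]; field_simp
    have hwsq : w u ^ 2 = (s * ρ u)^2 := by
      have hexp : Complex.exp (Complex.log (-h u)/2) ^ 2 = -h u := by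
        rw [sq, ← Complex.exp_add]
        have he : Complex.log (-h u)/2 + Complex.log (-h u)/2 = Complex.log (-h u) := by ring
        rw [he, Complex.exp_log (hhne u hre)]
      have h1 : w u ^ 2 = I^2 * Complex.exp (Complex.log (-h u)/2) ^ 2 := by
        simp only [hw]; ring
      rw [h1, hexp, Complex.I_sq]
      have h2 : (s * ρ u)^2 = s^2 * ρ u^2 := by ring
      rw [h2, hs]
      simp only [hh]
      ring
    have hgoal : Complex.cosh (Complex.log ((1 + s)/(1 - s))) = (1 - u)/u := by
      have hcosh : Complex.cosh (Complex.log ((1 + s)/(1 - s)))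
          = (Complex.exp (Complex.log ((1 + s)/(1 - s)))
            + Complex.exp (-(Complex.log ((1 + s)/(1 - s)))))/2 := rfl
      rw [hcosh, Complex.exp_neg, Complex.exp_log hv]
      have hs12 : (1:ℂ) - s^2 ≠ 0 := by
        intro h0
        rcases mul_eq_zero.1 (show ((1:ℂ) - s) * (1 + s) = 0 by linear_combination h0) with
          h' | h'
        · exact hs1 h'
        · exact hs2 h'
      have hu' : u = (1 - s^2)/2 := by linear_combination hs/2
      rw [hu']
      field_simp
      ring
    have hfac : (w u - s * ρ u) * (w u + s * ρ u) = 0 := by linear_combination hwsq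
    rcases mul_eq_zero.1 hfac with h0 | h0
    · have hww : w u = s * ρ u := by linear_combination h0
      rw [hww, hsρ, hgoal]
    · have hww : w u = -(s * ρ u) := by linear_combination h0
      rw [hww, Complex.cosh_neg, hsρ, hgoal]
  -- derivative of h
  have hDh : ∀ u : ℂ, u ∈ Metric.ball (1:ℂ) ε →
      HasDerivAt h (-2 * ρ u^2 + (1 - 2*u) * (2 * ρ u * deriv ρ u)) u := by
    intro u hu
    have hdρ : HasDerivAt ρ (deriv ρ u) u := (hρan u hu).differentiableAt.hasDerivAt
    have := ((hasDerivAt_const u (1:ℂ)).sub ((hasDerivAt_id u).const_mul (2:ℂ))).mul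
      (hdρ.pow 2)
    refine this.congr_deriv ?_
    simp only [id_eq, Pi.sub_apply, Pi.mul_apply, Pi.pow_apply]
    push_cast
    ring
  -- derivative of w
  have hDw : ∀ u : ℂ, u ∈ Metric.ball (1:ℂ) ε → 0 < (-h u).re →
      HasDerivAt w
        (w u * ((-2 * ρ u^2 + (1 - 2*u) * (2 * ρ u * deriv ρ u)) / h u) / 2) u := by
    intro u hu hre
    have hsl : -h u ∈ Complex.slitPlane := Complex.mem_slitPlane_iff.2 (Or.inl hre)
    have hdL := ((hDh u hu).neg.clog hsl)
    have := ((hdL.div_const 2).cexp.const_mul I)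
    refine this.congr_deriv ?_
    simp only [hw, Pi.neg_apply]
    rw [neg_div_neg_eq]
    ring
  -- F1 : the first derivative function of cosh (w ·)
  set F1 : ℂ → ℂ := fun u => Complex.sinh (w u) *
      (w u * ((-2 * ρ u^2 + (1 - 2*u) * (2 * ρ u * deriv ρ u)) / h u) / 2) with hF1
  have hDF : ∀ u : ℂ, u ∈ Metric.ball (1:ℂ) ε → 0 < (-h u).re →
      HasDerivAt (fun t => Complex.cosh (w t)) (F1 u) u := by
    intro u hu hre
    exact (hDw u hu hre).ccosh
  have hFr : ∀ᶠ u in nhds (1:ℂ), Complex.cosh (w u) = (1 - u)/u :=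
    hP.mono fun u hu => hfun u hu.1 hu.2.1 hu.2.2.1
  have hr' : ∀ u : ℂ, u ≠ 0 → HasDerivAt (fun t : ℂ => (1 - t)/t) (-(1/u^2)) u := by
    intro u hu
    have := ((hasDerivAt_const u (1:ℂ)).sub (hasDerivAt_id u)).div (hasDerivAt_id u) hu
    refine this.congr_deriv ?_
    simp only [id_eq, Pi.sub_apply, Pi.div_apply]
    field_simp
    ring
  have hF1r : ∀ᶠ u in nhds (1:ℂ), F1 u = -(1/u^2) := by
    filter_upwards [hP, hFr.eventually_nhds] with u hu hd
    have h1 : deriv (fun t => Complex.cosh (w t)) u = F1 u := (hDF u hu.1 hu.2.1).deriv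
    have h2 : deriv (fun t => Complex.cosh (w t)) u = deriv (fun t : ℂ => (1 - t)/t) u :=
      Filter.EventuallyEq.deriv_eq hd
    have h3 : deriv (fun t : ℂ => (1 - t)/t) u = -(1/u^2) := (hr' u hu.2.2.1).deriv
    rw [← h1, h2, h3]
  -- values at 1
  have hexp1 : Complex.exp (Complex.log (-h 1) / 2) = p/2 := by
    rw [hh1', ← Complex.ofReal_log (by positivity)]
    have h5 : Real.log (Real.pi^2/4) = 2 * Real.log (Real.pi/2) := by
      rw [show Real.pi^2/4 = (Real.pi/2)^2 by ring, Real.log_pow]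
      push_cast; ring
    rw [h5]
    have h6 : ((2 * Real.log (Real.pi/2) : ℝ) : ℂ)/2 = ((Real.log (Real.pi/2) : ℝ) : ℂ) := by
      push_cast; ring
    rw [h6, ← Complex.ofReal_exp, Real.exp_log (by positivity)]
    push_cast [hp]
    ring
  have hw1 : w 1 = I * (p/2) := by
    simp only [hw]
    rw [hexp1]
  have hsinh1 : Complex.sinh (w 1) = I := by
    rw [hw1, mul_comm, Complex.sinh_mul_I]
    have hcast : (p/2 : ℂ) = ((Real.pi/2 : ℝ) : ℂ) := by push_cast [hp]; ring
    rw [hcast, ← Complex.ofReal_sin, Real.sin_pi_div_two]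
    simp
  have hcosh1 : Complex.cosh (w 1) = 0 := by
    rw [hw1, mul_comm, Complex.cosh_mul_I]
    have hcast : (p/2 : ℂ) = ((Real.pi/2 : ℝ) : ℂ) := by push_cast [hp]; ring
    rw [hcast, ← Complex.ofReal_cos, Real.cos_pi_div_two]
    simp
  -- first equation : d1 = 1 - p/2
  have eq1 : F1 1 = -1 := by
    have := hF1r.self_of_nhds
    rw [this]; norm_num
  have hd1v : d1 = 1 - p/2 := by
    rw [hF1] at eq1
    simp only at eq1
    rw [hsinh1, hw1, hρ1, hh1] at eq1
    simp only [← hd1def] at eq1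
    field_simp [hp0] at eq1
    have hkey : 16*p^2*d1 = 16*p^2*(1 - p/2) := by
      linear_combination (-2*p^2)*eq1 + (8*p^2*(p+2*d1)) * Complex.I_sq
    exact mul_left_cancel₀ (by simp [hp0] : (16*p^2 : ℂ) ≠ 0) hkey
  -- second derivative data
  have hdρ1 : HasDerivAt ρ d1 1 := (hρan 1 h1mem).differentiableAt.hasDerivAt
  have hdρ'1 : HasDerivAt (deriv ρ) d2 1 :=
    ((hρan.deriv) 1 h1mem).differentiableAt.hasDerivAt
  have hh1ne : h 1 ≠ 0 := by rw [hh1]; simp [hp0]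
  have hDnum : HasDerivAt (fun u => -2 * ρ u^2 + (1 - 2*u) * (2 * ρ u * deriv ρ u))
      (-4*p*d1 - 2*d1^2 - p*d2) 1 := by
    have h1 := (hdρ1.pow 2).const_mul (-2 : ℂ)
    have h2 := ((hasDerivAt_const (1:ℂ) (1:ℂ)).sub ((hasDerivAt_id (1:ℂ)).const_mul
      (2:ℂ))).mul ((hdρ1.const_mul (2:ℂ)).mul hdρ'1)
    refine (h1.add h2).congr_deriv ?_
    simp only [id_eq, pow_one, Pi.sub_apply, Pi.mul_apply, Pi.pow_apply]
    rw [hρ1]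
    simp only [← hd1def, ← hd2def]
    push_cast
    ring
  have hnum1 : -2 * ρ 1^2 + (1 - 2*1) * (2 * ρ 1 * deriv ρ 1) = -p := by
    rw [hρ1]
    simp only [← hd1def]
    rw [hd1v]
    ring
  have hDw1c : HasDerivAt w I 1 := by
    refine (hDw 1 h1mem hre1).congr_deriv ?_
    rw [hw1, hnum1, hh1]
    field_simp
    ring
  have hA : HasDerivAt (fun u => -2 * ρ u^2 + (1 - 2*u) * (2 * ρ u * deriv ρ u))
      (3/2*p^2 - 2*p - 2 - p*d2) 1 := by
    refine hDnum.congr_deriv ?_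
    rw [hd1v]
    ring
  have hDqc : HasDerivAt
      (fun u => (-2 * ρ u^2 + (1 - 2*u) * (2 * ρ u * deriv ρ u)) / h u)
      ((-4*(3/2*p^2 - 2*p - 2 - p*d2) - 16)/p^2) 1 := by
    refine (hA.div (hDh 1 h1mem) hh1ne).congr_deriv ?_
    rw [hnum1, hh1]
    field_simp [hp0]
    ring
  have hDwqc : HasDerivAt
      (fun u => w u * ((-2 * ρ u^2 + (1 - 2*u) * (2 * ρ u * deriv ρ u)) / h u) / 2)
      (I*(4 + 2*d2 - 3*p)/2) 1 := by
    refine ((hDw1c.mul hDqc).div_const 2).congr_deriv ?_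
    rw [hnum1, hh1, hw1]
    have h4 : (p:ℂ)^4 * (p⁻¹)^4 = 1 := by
      rw [← mul_pow, mul_inv_cancel₀ hp0, one_pow]
    field_simp [hp0]
    ring
  have hDF1c : HasDerivAt F1 ((3*p - 4 - 2*d2)/2) 1 := by
    refine ((hDw1c.csinh).mul hDwqc).congr_deriv ?_
    rw [hcosh1, hsinh1]
    linear_combination ((4 + 2*d2 - 3*p)/2) * Complex.I_sq
  have hG : HasDerivAt (fun u : ℂ => -(1/u^2)) 2 1 := by
    have := ((hasDerivAt_const (1:ℂ) (1:ℂ)).div (hasDerivAt_pow 2 (1:ℂ)) (by norm_num)).neg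
    refine this.congr_deriv ?_
    norm_num
  have e2b : deriv F1 1 = 2 := by
    rw [Filter.EventuallyEq.deriv_eq hF1r, hG.deriv]
  have eq2 := (hDF1c.deriv.symm.trans e2b)
  have hd2v : d2 = 3*p/2 - 4 := by linear_combination -eq2
  -- β computations
  have hB1 : (fun u : ℂ => p/2/ρ u) 1 = 1 := by
    simp only
    rw [hρ1]
    exact div_self (by simp [hp0])
  have hDB : ∀ᶠ u in nhds (1:ℂ), deriv (fun u : ℂ => p/2/ρ u) u
      = (0 * ρ u - p/2 * deriv ρ u)/ρ u^2 := by
    filter_upwards [hP] with u hu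
    exact ((hasDerivAt_const u (p/2)).div ((hρan u hu.1).differentiableAt.hasDerivAt)
      (hρne u hu.2.2.2)).deriv
  have hB1v : deriv (fun u : ℂ => p/2/ρ u) 1 = 1 - 2/p := by
    rw [hDB.self_of_nhds, hρ1]
    simp only [← hd1def]
    rw [hd1v]
    field_simp
    ring
  have hBB : deriv (deriv (fun u : ℂ => p/2/ρ u)) 1
      = deriv (fun u : ℂ => (0 * ρ u - p/2 * deriv ρ u)/ρ u^2) 1 :=
    Filter.EventuallyEq.deriv_eq hDB
  have hρ1ne2 : ρ 1 ^ 2 ≠ 0 := by rw [hρ1]; simp [hp0]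
  have hDB1 := ((hdρ1.const_mul (0:ℂ)).sub (hdρ'1.const_mul (p/2))).div (hdρ1.pow 2) hρ1ne2
  have hB2v : deriv (deriv (fun u : ℂ => p/2/ρ u)) 1 = 8/p^2 - 1 := by
    rw [hBB, show deriv (fun u : ℂ => (0 * ρ u - p/2 * deriv ρ u)/ρ u^2) 1 = _ from hDB1.deriv]
    simp only [Pi.sub_apply, Pi.mul_apply, Pi.pow_apply]
    rw [hρ1]
    simp only [← hd1def, ← hd2def]
    rw [hd1v, hd2v]
    field_simp
    ring
  refine ⟨hB1, hB1v, hB2v, ?_, ?_⟩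
  · rw [hB1, hB1v, hB2v]
    field_simp
    ring
  · have h315 : Real.pi < 3.15 := Real.pi_lt_d2
    have h314 : 3.141592 < Real.pi := Real.pi_gt_d6
    have hkey : 0 < 4 + 2*Real.pi - Real.pi^2 := by nlinarith
    have : (4 / Real.pi ^ 2 + 2 / Real.pi - 1 : ℝ)
        = (4 + 2*Real.pi - Real.pi^2)/Real.pi^2 := by
      field_simp
    rw [this]
    positivity
end

section
/- Let p be a nonconstant complex polynomial, let t > 0, and let γ be a connected component of the level set {z ∈ ℂ : |p(z)| = t} which is a Jordan curve; let U be the bounded complementary component (the interior) of γ. If p has exactly one zero in U counted with multiplicity, then p maps U bijectively (univalently) onto the open disk {ζ ∈ ℂ : |ζ| < t}; in particular, the derivative p' has no zeros in U. -/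
open Polynomial Metric Set Filter Topology Bornology

variable {p : Polynomial ℂ}

lemma aux_sub_neX (hp : 0 < p.natDegree) (w : ℂ) : p - Polynomial.C w ≠ 0 := by
  intro h
  have h2 := Polynomial.natDegree_sub_C (p := p) (a := w)
  rw [h] at h2; simp at h2; omega

lemma aux_mem_rootsX (hp : 0 < p.natDegree) {w z : ℂ} :
    z ∈ (p - Polynomial.C w).roots ↔ Polynomial.eval z p = w := by
  rw [Polynomial.mem_roots (aux_sub_neX hp w)]
  simp [Polynomial.IsRoot, sub_eq_zero]

lemma aux_not_eventually_constX (hp : 0 < p.natDegree) (z : ℂ) (c : ℂ) :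
    ¬ (∀ᶠ ζ in 𝓝 z, Polynomial.eval ζ p = c) := by
  intro h
  have hana : AnalyticOnNhd ℂ (fun ζ => Polynomial.eval ζ p - c) Set.univ := fun x _ =>
    ((Polynomial.differentiable p).analyticAt x).sub analyticAt_const
  have h0 : ∀ ζ : ℂ, Polynomial.eval ζ p - c = 0 := by
    intro ζ
    have h1 := hana.eqOn_zero_of_preconnected_of_eventuallyEq_zero isPreconnected_univ
      (Set.mem_univ z) (by filter_upwards [h] with x hx; simp [hx])
    exact h1 (Set.mem_univ ζ)
  have hpc : p = Polynomial.C c := Polynomial.funext fun x => by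
    have h2 := h0 x
    simp only [Polynomial.eval_C]
    exact sub_eq_zero.mp h2
  rw [hpc] at hp; simp at hp

lemma aux_isOpenMapX (hp : 0 < p.natDegree) : IsOpenMap (fun z => Polynomial.eval z p) := by
  apply IsOpenMap.of_nhds_le
  intro a
  rcases ((Polynomial.differentiable p).analyticAt a).eventually_constant_or_nhds_le_map_nhds with h | h
  · exact absurd h (aux_not_eventually_constX hp a _)
  · exact h

section Helpers
variable {p : Polynomial ℂ}

lemma aux_sublevel_bdd (hp : 0 < p.natDegree) (c : ℝ) :
    Bornology.IsBounded {z : ℂ | ‖Polynomial.eval z p‖ ≤ c} := by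
  have hdeg : 0 < p.degree := Polynomial.natDegree_pos_iff_degree_pos.mp hp
  have ht : Tendsto (fun z : ℂ => ‖Polynomial.eval z p‖) (Bornology.cobounded ℂ) atTop :=
    Polynomial.tendsto_norm_atTop p hdeg (z := id) tendsto_norm_cobounded_atTop
  have hev : ∀ᶠ z : ℂ in Bornology.cobounded ℂ, c < ‖Polynomial.eval z p‖ :=
    ht.eventually_gt_atTop c
  have hco : Bornology.IsCobounded {z : ℂ | c < ‖Polynomial.eval z p‖} := hev
  have h2 : Bornology.IsBounded {z : ℂ | c < ‖Polynomial.eval z p‖}ᶜ :=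
    Bornology.isBounded_compl_iff.mpr hco
  convert h2 using 1
  ext z; simp [not_lt]

/-- multiset with two distinct members has card ≥ 2 -/
lemma aux_two_le_card {α : Type*} {s : Multiset α} {a b : α} (ha : a ∈ s) (hb : b ∈ s)
    (hne : a ≠ b) : 2 ≤ Multiset.card s := by
  classical
  have h : ({a, b} : Multiset α) ≤ s := by
    rw [Multiset.le_iff_count]
    intro x
    by_cases hxa : x = a
    · subst hxa
      have : Multiset.count x ({x, b} : Multiset α) = 1 := by
        simp [Multiset.count_cons, Multiset.count_singleton, hne]
      rw [this]
      exact Multiset.one_le_count_iff_mem.mpr ha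
    · by_cases hxb : x = b
      · subst hxb
        have : Multiset.count x ({a, x} : Multiset α) = 1 := by
          simp [Multiset.count_cons, Multiset.count_singleton, Ne.symm hne, hxa]
        rw [this]
        exact Multiset.one_le_count_iff_mem.mpr hb
      · simp [Multiset.count_cons, Multiset.count_singleton, hxa, hxb]
  calc (2 : ℕ) = Multiset.card ({a, b} : Multiset α) := by simp
    _ ≤ Multiset.card s := Multiset.card_le_card h

lemma aux_finset_min {α : Type*} (s : Finset α) (f : α → ℝ) (h : ∀ a ∈ s, 0 < f a) :
    ∃ ε > 0, ∀ a ∈ s, ε ≤ f a := by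
  classical
  induction s using Finset.induction_on with
  | empty => exact ⟨1, one_pos, by simp⟩
  | @insert a s ha ih =>
    obtain ⟨ε, hε, hle⟩ := ih (fun x hx => h x (Finset.mem_insert_of_mem hx))
    refine ⟨min ε (f a), lt_min hε (h a (Finset.mem_insert_self _ _)), ?_⟩
    intro x hx
    rcases Finset.mem_insert.mp hx with rfl | hx
    · exact min_le_right _ _
    · exact le_trans (min_le_left _ _) (hle x hx)

/-- roots of nearby polynomials p - C w are near roots of p - C w₀ -/
lemma aux_roots_near (hp : 0 < p.natDegree) (w₀ : ℂ) {ε : ℝ} (hε : 0 < ε) :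
    ∀ᶠ w in 𝓝 w₀, ∀ r ∈ (p - Polynomial.C w).roots, ∃ s ∈ (p - Polynomial.C w₀).roots,
      dist r s < ε := by
  classical
  set T := (p - Polynomial.C w₀).roots.toFinset with hT
  set K : Set ℂ := {z : ℂ | ‖Polynomial.eval z p‖ ≤ ‖w₀‖ + 1} ∩
      {z : ℂ | ∀ s ∈ T, ε ≤ dist z s} with hK
  have hKclosed : IsClosed K := by
    apply IsClosed.inter
    · exact isClosed_le (by continuity) continuous_const
    · have : {z : ℂ | ∀ s ∈ T, ε ≤ dist z s} = ⋂ s ∈ T, {z : ℂ | ε ≤ dist z s} := by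
        ext z; simp
      rw [this]
      exact isClosed_biInter fun s _ => isClosed_le continuous_const (by continuity)
  have hKbdd : Bornology.IsBounded K :=
    ((Polynomial.natDegree_pos_iff_degree_pos.mp hp) |> fun hdeg =>
      (Polynomial.tendsto_norm_atTop p hdeg (z := id) tendsto_norm_cobounded_atTop).eventually_gt_atTop (‖w₀‖+1)) |> fun hev => by
      have h2 : Bornology.IsBounded {z : ℂ | ‖Polynomial.eval z p‖ ≤ ‖w₀‖ + 1} := by
        have h3 : Bornology.IsBounded {z : ℂ | (‖w₀‖+1) < ‖Polynomial.eval z p‖}ᶜ :=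
          Bornology.isBounded_compl_iff.mpr hev
        convert h3 using 1
        ext z; simp [not_lt]
      exact h2.subset (Set.inter_subset_left)
  have hKcompact : IsCompact K := Metric.isCompact_of_isClosed_isBounded hKclosed hKbdd
  -- min of ‖eval z p - w₀‖ on K is positive
  have hpos : ∀ z ∈ K, 0 < ‖Polynomial.eval z p - w₀‖ := by
    intro z hz
    rw [norm_pos_iff, sub_ne_zero]
    intro heq
    have hzroot : z ∈ (p - Polynomial.C w₀).roots := by
      rw [Polynomial.mem_roots (by
        intro h0
        have h2 := Polynomial.natDegree_sub_C (p := p) (a := w₀)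
        rw [h0] at h2; simp at h2; omega)]
      simp [Polynomial.IsRoot, heq]
    have hzT : z ∈ T := Multiset.mem_toFinset.mpr hzroot
    have := hz.2 z hzT
    simp at this
    linarith
  obtain ⟨δ, hδpos, hδ⟩ : ∃ δ > 0, ∀ z ∈ K, δ ≤ ‖Polynomial.eval z p - w₀‖ := by
    rcases K.eq_empty_or_nonempty with hKe | hKne
    · exact ⟨1, one_pos, by rw [hKe]; simp⟩
    · obtain ⟨z₀, hz₀K, hmin⟩ := hKcompact.exists_isMinOn hKne
        ((by continuity : Continuous fun z : ℂ => ‖Polynomial.eval z p - w₀‖)).continuousOn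
      exact ⟨_, hpos z₀ hz₀K, fun z hz => hmin hz⟩
  rw [Metric.eventually_nhds_iff]
  refine ⟨min δ 1, lt_min hδpos one_pos, ?_⟩
  intro w hw r hr
  have hevalr : Polynomial.eval r p = w := by
    rw [Polynomial.mem_roots] at hr
    · have h2 := hr
      simp only [Polynomial.IsRoot, Polynomial.eval_sub, Polynomial.eval_C] at h2
      rwa [sub_eq_zero] at h2
    · intro h0
      have h2 := Polynomial.natDegree_sub_C (p := p) (a := w)
      rw [h0] at h2; simp at h2; omega
  have hrnotK : r ∉ K := by
    intro hrK
    have h1 := hδ r hrK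
    rw [hevalr] at h1
    have : dist w w₀ < δ := lt_of_lt_of_le hw (min_le_left _ _)
    rw [dist_eq_norm] at this
    linarith
  have hrb : ‖Polynomial.eval r p‖ ≤ ‖w₀‖ + 1 := by
    rw [hevalr]
    have : dist w w₀ < 1 := lt_of_lt_of_le hw (min_le_right _ _)
    calc ‖w‖ ≤ ‖w₀‖ + dist w w₀ := by
          rw [dist_eq_norm]
          calc ‖w‖ = ‖w₀ + (w - w₀)‖ := by ring_nf
            _ ≤ ‖w₀‖ + ‖w - w₀‖ := norm_add_le _ _
      _ ≤ ‖w₀‖ + 1 := by linarith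
  simp only [hK, Set.mem_inter_iff, Set.mem_setOf_eq, not_and_or] at hrnotK
  rcases hrnotK with h | h
  · exact absurd hrb h
  · push_neg at h
    obtain ⟨s, hsT, hds⟩ := h
    exact ⟨s, Multiset.mem_toFinset.mp hsT, hds⟩



lemma aux_mult_one_iff (hp : 0 < p.natDegree) {w z : ℂ} (hz : Polynomial.eval z p = w) :
    Polynomial.rootMultiplicity z (p - Polynomial.C w) = 1 ↔
      Polynomial.eval z (Polynomial.derivative p) ≠ 0 := by
  classical
  set q := p - Polynomial.C w with hqdef
  have hq0 : q ≠ 0 := aux_sub_neX hp w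
  set m := rootMultiplicity z q with hm
  set g := q /ₘ (X - Polynomial.C z)^m with hg
  have hfact : (X - Polynomial.C z)^m * g = q := pow_mul_divByMonic_rootMultiplicity_eq q z
  have hgz : Polynomial.eval z g ≠ 0 := eval_divByMonic_pow_rootMultiplicity_ne_zero z hq0
  have hm1 : 1 ≤ m := (rootMultiplicity_pos hq0).mpr (by simp [hqdef, IsRoot, hz])
  have hdq : Polynomial.derivative q = Polynomial.derivative p := by simp [hqdef]
  have heval : Polynomial.eval z (Polynomial.derivative q)
      = (m : ℂ) * (0:ℂ)^(m-1) * Polynomial.eval z g := by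
    conv_lhs => rw [← hfact]
    rw [derivative_mul, derivative_pow, derivative_X_sub_C]
    have h0 : Polynomial.eval z (X - Polynomial.C z) = 0 := by simp
    simp only [Polynomial.eval_add, Polynomial.eval_mul, Polynomial.eval_pow,
      Polynomial.eval_natCast, h0, Polynomial.eval_one, mul_one]
    rw [zero_pow (by omega : m ≠ 0)]
    simp only [Polynomial.eval_C]
    ring
  rw [← hdq, heval]
  constructor
  · intro h1
    rw [h1]
    simpa using hgz
  · intro hne
    by_contra hne1
    have hm2 : 2 ≤ m := by omega
    rw [zero_pow (by omega : m - 1 ≠ 0)] at hne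
    simp at hne
  
lemma aux_loc_inj {z : ℂ} (hd : Polynomial.eval z (Polynomial.derivative p) ≠ 0) :
    ∃ ε > 0, Set.InjOn (fun ζ => Polynomial.eval ζ p) (Metric.ball z ε) := by
  have hs := (p.hasStrictDerivAt z).hasStrictFDerivAt_equiv hd
  have hinv := hs.eventually_left_inverse
  rw [Metric.eventually_nhds_iff] at hinv
  obtain ⟨ε, hε, h⟩ := hinv
  refine ⟨ε, hε, fun a ha b hb hab => ?_⟩
  have ha' := h (show dist a z < ε from mem_ball.mp ha)
  have hb' := h (show dist b z < ε from mem_ball.mp hb)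
  simp only at hab
  rw [← ha', ← hb', hab]



/-- Near a root of multiplicity ≥ 2, every nearby value `w ≠ w₀` is attained at
two distinct points close to `z`. -/
lemma aux_double_point (hp : 0 < p.natDegree) {w₀ z : ℂ} (hz : Polynomial.eval z p = w₀)
    (hm2 : 2 ≤ Polynomial.rootMultiplicity z (p - Polynomial.C w₀))
    {r₁ : ℝ} (hr₁ : 0 < r₁) :
    ∀ᶠ w in 𝓝[≠] w₀, ∃ a b : ℂ, a ∈ Metric.ball z r₁ ∧ b ∈ Metric.ball z r₁ ∧ a ≠ b ∧
      Polynomial.eval a p = w ∧ Polynomial.eval b p = w := by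
  classical
  set q := p - Polynomial.C w₀ with hqdef
  have hq0 : q ≠ 0 := aux_sub_neX hp w₀
  set m := rootMultiplicity z q with hmdef
  set g := q /ₘ (X - Polynomial.C z)^m with hgdef
  have hfact : (X - Polynomial.C z)^m * g = q := pow_mul_divByMonic_rootMultiplicity_eq q z
  set c := Polynomial.eval z g with hcdef
  have hc0 : c ≠ 0 := eval_divByMonic_pow_rootMultiplicity_ne_zero z hq0
  have hm0 : (m : ℂ) ≠ 0 := by
    simp only [Ne, Nat.cast_eq_zero]; omega
  -- the m-th root function
  set E : ℂ → ℂ := fun ζ =>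
    Complex.exp ((Complex.log (Polynomial.eval ζ g / c) + Complex.log c) / (m : ℂ)) with hEdef
  set Fn : ℂ → ℂ := fun ζ => (ζ - z) * E ζ with hFdef
  -- F^m = eval q on the set where g ≠ 0
  have hFm : ∀ ζ : ℂ, Polynomial.eval ζ g ≠ 0 → Fn ζ ^ m = Polynomial.eval ζ q := by
    intro ζ hgζ
    have h1 : E ζ ^ m = Polynomial.eval ζ g := by
      rw [hEdef]
      rw [← Complex.exp_nat_mul]
      have : (m : ℂ) * ((Complex.log (Polynomial.eval ζ g / c) + Complex.log c) / (m : ℂ))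
          = Complex.log (Polynomial.eval ζ g / c) + Complex.log c := by
        field_simp
      rw [this, Complex.exp_add, Complex.exp_log (div_ne_zero hgζ hc0), Complex.exp_log hc0]
      field_simp
    calc Fn ζ ^ m = (ζ - z) ^ m * E ζ ^ m := by rw [hFdef]; exact mul_pow _ _ m
      _ = (ζ - z) ^ m * Polynomial.eval ζ g := by rw [h1]
      _ = Polynomial.eval ζ q := by
          conv_rhs => rw [← hfact]
          simp [Polynomial.eval_mul, Polynomial.eval_pow]
  -- strict derivative of Fn at z is nonzero
  have hdivpt : Polynomial.eval z g / c = 1 := div_self hc0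
  have hEstrict : ∃ e' : ℂ, HasStrictDerivAt E e' z := by
    have h₁ : HasStrictDerivAt (fun ζ => Polynomial.eval ζ g / c)
        (Polynomial.eval z (Polynomial.derivative g) / c) z := (g.hasStrictDerivAt z).div_const c
    have hmem : Polynomial.eval z g / c ∈ Complex.slitPlane := by
      rw [hdivpt]; exact Complex.one_mem_slitPlane
    have hlog := (Complex.hasStrictDerivAt_log hmem).comp z h₁
    have hinner := (hlog.add_const (Complex.log c)).div_const (m : ℂ)
    exact ⟨_, (Complex.hasStrictDerivAt_exp _).comp z hinner⟩
  obtain ⟨e', hE⟩ := hEstrict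
  have hEz : E z ≠ 0 := Complex.exp_ne_zero _
  have hFstrict : HasStrictDerivAt Fn (E z) z := by
    have hu : HasStrictDerivAt (fun ζ : ℂ => ζ - z) 1 z := (hasStrictDerivAt_id z).sub_const z
    have := hu.mul hE
    have h2 : (1 : ℂ) * E z + (z - z) * e' = E z := by simp
    rw [h2] at this
    exact this
  have hFd := hFstrict.hasStrictFDerivAt_equiv hEz
  set Φ := hFd.toOpenPartialHomeomorph Fn with hΦdef
  have hzsource : z ∈ Φ.source := hFd.mem_toOpenPartialHomeomorph_source
  have hΦeq : ∀ ζ, Φ ζ = Fn ζ := fun ζ => rfl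
  have hFnz : Fn z = 0 := by rw [hFdef]; simp
  have h0target : (0 : ℂ) ∈ Φ.target := by
    have := hFd.image_mem_toOpenPartialHomeomorph_target
    rwa [hFnz] at this
  -- choose a small ball around z inside good sets
  have hgopen : IsOpen {ζ : ℂ | Polynomial.eval ζ g ≠ 0} :=
    isOpen_ne.preimage (Polynomial.continuous g)
  have hzO : z ∈ {ζ : ℂ | Polynomial.eval ζ g ≠ 0} ∩ Φ.source := ⟨hc0, hzsource⟩
  obtain ⟨r₂, hr₂pos, hr₂⟩ := Metric.isOpen_iff.mp (hgopen.inter Φ.open_source) z hzO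
  set r₃ := min r₂ r₁ with hr₃def
  have hr₃pos : 0 < r₃ := lt_min hr₂pos hr₁
  have hball₃ : Metric.ball z r₃ ⊆ {ζ : ℂ | Polynomial.eval ζ g ≠ 0} ∩ Φ.source :=
    subset_trans (Metric.ball_subset_ball (min_le_left _ _)) hr₂
  have hball₁ : Metric.ball z r₃ ⊆ Metric.ball z r₁ :=
    Metric.ball_subset_ball (min_le_right _ _)
  -- Φ.symm is continuous at 0 and maps 0 to z
  have hsymm0 : Φ.symm 0 = z := by
    have h1 := Φ.left_inv hzsource
    have h2 : Φ z = 0 := by rw [hΦeq, hFnz]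
    rwa [h2] at h1
  have hsymmcont : ContinuousAt Φ.symm 0 := Φ.continuousAt_symm h0target
  have hpre : Φ.symm ⁻¹' (Metric.ball z r₃) ∈ 𝓝 (0 : ℂ) := by
    apply hsymmcont
    rw [hsymm0]
    exact Metric.ball_mem_nhds z hr₃pos
  have htargetnhds : Φ.target ∈ 𝓝 (0 : ℂ) := Φ.open_target.mem_nhds h0target
  obtain ⟨ρ, hρpos, hρ⟩ := Metric.mem_nhds_iff.mp (Filter.inter_mem htargetnhds hpre)
  -- the eventual statement
  have hρm : (0:ℝ) < ρ ^ m := pow_pos hρpos m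
  have hballmem : {w : ℂ | dist w w₀ < ρ ^ m} ∈ 𝓝 w₀ := by
    have := Metric.ball_mem_nhds w₀ hρm
    exact this
  filter_upwards [eventually_nhdsWithin_of_eventually_nhds hballmem, self_mem_nhdsWithin]
    with w hwball hwne
  have hv0 : w - w₀ ≠ 0 := sub_ne_zero.mpr hwne
  set v := w - w₀ with hvdef
  set r := Complex.exp (Complex.log v / (m : ℂ)) with hrdef
  have hrm : r ^ m = v := by
    rw [hrdef, ← Complex.exp_nat_mul]
    rw [mul_div_cancel₀ _ hm0, Complex.exp_log hv0]
  set ω := Complex.exp ((2 * Real.pi / (m:ℝ) : ℝ) * Complex.I) with hωdef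
  have hmR : ((m:ℝ)) ≠ 0 := by
    simp only [Ne, Nat.cast_eq_zero]; omega
  have hωm : ω ^ m = 1 := by
    rw [hωdef, ← Complex.exp_nat_mul]
    have : (m : ℂ) * (((2 * Real.pi / (m:ℝ) : ℝ) : ℂ) * Complex.I)
        = 2 * (Real.pi : ℂ) * Complex.I := by
      push_cast
      field_simp
    rw [this, Complex.exp_two_pi_mul_I]
  have hω1 : ω ≠ 1 := by
    rw [hωdef, Ne, Complex.exp_eq_one_iff]
    push_neg
    intro n hn
    have him := congrArg Complex.im hn
    simp [Complex.mul_im, Complex.ofReal_re, Complex.ofReal_im] at him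
    -- him : 2 * π / m = n * (2 * π)  (in some form)
    have hπ : (0:ℝ) < Real.pi := Real.pi_pos
    have hm2R : (2:ℝ) ≤ (m:ℝ) := by exact_mod_cast hm2
    rcases le_or_gt (n:ℝ) 0 with hn0 | hn0
    · have h1 : (0:ℝ) < 2 * Real.pi / m := by positivity
      nlinarith [him]
    · have hn1 : (1:ℝ) ≤ (n:ℝ) := by
        have : (1:ℤ) ≤ n := by exact_mod_cast (by exact_mod_cast hn0 : (0:ℤ) < n)
        exact_mod_cast this
      have h2 : 2 * Real.pi / (m:ℝ) ≤ Real.pi := by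
        rw [div_le_iff₀ (by linarith : (0:ℝ) < (m:ℝ))]
        nlinarith
      nlinarith [him]
  have hr0 : r ≠ 0 := Complex.exp_ne_zero _
  set r' := r * ω with hr'def
  have hrne : r ≠ r' := by
    rw [hr'def]
    intro h
    nth_rewrite 1 [← mul_one r] at h
    exact hω1 (mul_left_cancel₀ hr0 h).symm
  have hr'm : r' ^ m = v := by rw [hr'def, mul_pow, hrm, hωm, mul_one]
  have habsr : ‖r‖ < ρ := by
    have h1 : ‖r‖ ^ m = ‖v‖ := by
      rw [← norm_pow, hrm]
    have h2 : ‖v‖ < ρ ^ m := by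
      rw [hvdef, ← Complex.dist_eq]
      exact hwball
    have h3 : ‖r‖ ^ m < ρ ^ m := by rw [h1]; exact h2
    exact lt_of_pow_lt_pow_left₀ m hρpos.le h3
  have habsω : ‖ω‖ = 1 := by
    rw [hωdef]
    exact Complex.norm_exp_ofReal_mul_I _
  have habsr' : ‖r'‖ < ρ := by
    rw [hr'def, norm_mul, habsω, mul_one]
    exact habsr
  have hrball : r ∈ Metric.ball (0:ℂ) ρ := by
    rw [Metric.mem_ball, Complex.dist_eq]
    simpa using habsr
  have hr'ball : r' ∈ Metric.ball (0:ℂ) ρ := by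
    rw [Metric.mem_ball, Complex.dist_eq]
    simpa using habsr'
  have hrgood := hρ hrball
  have hr'good := hρ hr'ball
  set a := Φ.symm r with hadef
  set b := Φ.symm r' with hbdef
  have haball : a ∈ Metric.ball z r₃ := hrgood.2
  have hbball : b ∈ Metric.ball z r₃ := hr'good.2
  have haO := hball₃ haball
  have hbO := hball₃ hbball
  have hΦa : Fn a = r := by
    have := Φ.right_inv hrgood.1
    rw [← hΦeq]
    exact this
  have hΦb : Fn b = r' := by
    have := Φ.right_inv hr'good.1
    rw [← hΦeq]
    exact this
  have hevala : Polynomial.eval a p = w := by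
    have h1 := hFm a haO.1
    rw [hΦa, hrm] at h1
    have h2 : Polynomial.eval a q = Polynomial.eval a p - w₀ := by
      rw [hqdef]; simp
    rw [h2] at h1
    rw [hvdef] at h1
    linear_combination -h1
  have hevalb : Polynomial.eval b p = w := by
    have h1 := hFm b hbO.1
    rw [hΦb, hr'm] at h1
    have h2 : Polynomial.eval b q = Polynomial.eval b p - w₀ := by
      rw [hqdef]; simp
    rw [h2] at h1
    rw [hvdef] at h1
    linear_combination -h1
  have hab : a ≠ b := by
    intro h
    apply hrne
    rw [← hΦa, ← hΦb, h]
  exact ⟨a, b, hball₁ haball, hball₁ hbball, hab, hevala, hevalb⟩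

end Helpers



open scoped Classical in
/-- if `γ` is a connected component of the lemniscate `{z : |p(z)| = t}`
(`t > 0`, `p` nonconstant) which is a Jordan curve, and `U` is a bounded connected
component of its complement, and `p` has exactly one zero in `U` counted with
multiplicity, then `p` maps `U` bijectively onto the open disk of radius `t` centered at
`0`; in particular `p'` has no zeros in `U`. -/
theorem univalent_on_petal (p : Polynomial ℂ) (hp : 0 < p.natDegree)
    (t : ℝ) (ht : 0 < t) (γ U : Set ℂ) (z₀ : ℂ)
    (hz₀ : ‖Polynomial.eval z₀ p‖ = t)
    (hγ : γ = connectedComponentIn {z : ℂ | ‖Polynomial.eval z p‖ = t} z₀)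
    (hJordan : ∃ φ : Circle → ℂ, Continuous φ ∧ Function.Injective φ ∧ Set.range φ = γ)
    (w₀ : ℂ) (hw₀ : w₀ ∈ γᶜ) (hU : U = connectedComponentIn γᶜ w₀)
    (hUbdd : Bornology.IsBounded U)
    (hone : (p.roots.filter fun z => z ∈ U).card = 1) :
    Set.BijOn (fun z => Polynomial.eval z p) U (Metric.ball (0 : ℂ) t) ∧
    ∀ z ∈ U, Polynomial.eval z p.derivative ≠ 0 := by
  have hpne : p ≠ 0 := fun h => by rw [h] at hp; simp at hp
  set L : Set ℂ := {z : ℂ | ‖Polynomial.eval z p‖ = t} with hL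
  have hz₀L : z₀ ∈ L := hz₀
  have hLclosed : IsClosed L := isClosed_eq (continuous_norm.comp p.continuous) continuous_const
  have hγclosed : IsClosed γ := by
    rw [hγ, connectedComponentIn_eq_image hz₀L]
    exact (hLclosed.isClosedEmbedding_subtypeVal).isClosedMap _ isClosed_connectedComponent
  have hγsub : γ ⊆ L := by rw [hγ]; exact connectedComponentIn_subset L z₀
  have hγcopen : IsOpen γᶜ := hγclosed.isOpen_compl
  have hUopen : IsOpen U := by rw [hU]; exact hγcopen.connectedComponentIn
  have hw₀U : w₀ ∈ U := by rw [hU]; exact mem_connectedComponentIn hw₀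
  have hUconn : IsPreconnected U := by
    rw [hU]; exact (isConnected_connectedComponentIn_iff.mpr hw₀).isPreconnected
  have hUclosure : closure U ∩ γᶜ ⊆ U := by
    rw [hU, connectedComponentIn_eq_image hw₀]
    rintro y ⟨hy1, hy2⟩
    have hemb : Topology.IsEmbedding (Subtype.val : ↥(γᶜ) → ℂ) := Topology.IsEmbedding.subtypeVal
    have h1 : (⟨y, hy2⟩ : ↥(γᶜ)) ∈ closure (connectedComponent (⟨w₀, hw₀⟩ : ↥(γᶜ))) := by
      rw [hemb.closure_eq_preimage_closure_image]
      exact hy1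
    have h2 := isClosed_connectedComponent.closure_subset h1
    exact ⟨⟨y, hy2⟩, h2, rfl⟩
  have hfrontier : frontier U ⊆ γ := by
    intro x hx
    by_contra hxγ
    have hxU := hUclosure ⟨frontier_subset_closure hx, hxγ⟩
    rw [hUopen.frontier_eq] at hx
    exact hx.2 hxU
  have habs_frontier : ∀ x ∈ frontier U, ‖Polynomial.eval x p‖ = t :=
    fun x hx => hγsub (hfrontier hx)
  -- maximum modulus: |p| < t on U
  have hmapsto : ∀ z ∈ U, ‖Polynomial.eval z p‖ < t := by
    have hle : ∀ x ∈ closure U, ‖Polynomial.eval x p‖ ≤ t := fun x hx =>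
      Complex.norm_le_of_forall_mem_frontier_norm_le hUbdd
        ((Polynomial.differentiable p).diffContOnCl)
        (fun y hy => le_of_eq (by exact habs_frontier y hy)) hx
    intro z hzU
    rcases lt_or_eq_of_le (hle z (subset_closure hzU)) with h | h
    · exact h
    · exfalso
      have hmax : IsMaxOn (norm ∘ (fun ζ => Polynomial.eval ζ p)) U z := by
        intro y hy
        simp only [Function.comp_apply, Set.mem_setOf_eq]
        rw [h]
        exact hle y (subset_closure hy)
      have heq := Complex.eqOn_of_isPreconnected_of_isMaxOn_norm hUconn hUopen
        ((Polynomial.differentiable p).differentiableOn) hzU hmax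
      exact aux_not_eventually_constX hp z _
        (Filter.eventually_of_mem (hUopen.mem_nhds hzU) (fun ζ hζ => heq hζ))
  -- the root of p in U
  obtain ⟨zr, hzrfil⟩ := Multiset.card_eq_one.mp hone
  have hzrmem : zr ∈ Multiset.filter (fun z => z ∈ U) p.roots := by rw [hzrfil]; simp
  have hzrU : zr ∈ U := (Multiset.mem_filter.mp hzrmem).2
  have hzr0 : Polynomial.eval zr p = 0 := by
    have := (Multiset.mem_filter.mp hzrmem).1
    rw [Polynomial.mem_roots hpne] at this
    exact this
  -- surjectivity onto the ball
  have hsurj : ∀ w ∈ Metric.ball (0:ℂ) t, ∃ z ∈ U, Polynomial.eval z p = w := by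
    set A := ((fun z => Polynomial.eval z p) '' U) ∩ Metric.ball (0:ℂ) t with hA
    have hAopen : IsOpen A := ((aux_isOpenMapX hp) U hUopen).inter isOpen_ball
    have hclosed : Metric.ball (0:ℂ) t ∩ closure A ⊆ A := by
      rintro w ⟨hwball, hwcl⟩
      obtain ⟨u, hu, hulim⟩ := mem_closure_iff_seq_limit.mp hwcl
      have himg : ∀ k, ∃ x, x ∈ U ∧ Polynomial.eval x p = u k := fun k => (hu k).1
      choose zseq hzseqU hzseqeval using himg
      have hcomp : IsCompact (closure U) :=
        Metric.isCompact_of_isClosed_isBounded isClosed_closure hUbdd.closure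
      obtain ⟨zl, hzlcl, φ, hφ, hφlim⟩ := hcomp.tendsto_subseq (fun k => subset_closure (hzseqU k))
      have hevallim : Tendsto (fun k => Polynomial.eval (zseq (φ k)) p) atTop (𝓝 (Polynomial.eval zl p)) :=
        (p.continuous.continuousAt.tendsto).comp hφlim
      have heval2 : Tendsto (fun k => u (φ k)) atTop (𝓝 w) := hulim.comp hφ.tendsto_atTop
      have heqfun : (fun k => Polynomial.eval (zseq (φ k)) p) = fun k => u (φ k) := by
        funext k; exact hzseqeval (φ k)
      rw [heqfun] at hevallim
      have hwzl : Polynomial.eval zl p = w := tendsto_nhds_unique hevallim heval2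
      have habsw : ‖w‖ < t := by
        rw [Metric.mem_ball, Complex.dist_eq, sub_zero] at hwball
        exact hwball
      have hzlU : zl ∈ U := by
        by_contra hzlU
        have hfr : zl ∈ frontier U := by
          rw [hUopen.frontier_eq]; exact ⟨hzlcl, hzlU⟩
        have := habs_frontier zl hfr
        rw [hwzl] at this
        linarith
      exact ⟨⟨zl, hzlU, hwzl⟩, hwball⟩
    have hsub : Metric.ball (0:ℂ) t ⊆ A := by
      have hopen2 : IsOpen (Metric.ball (0:ℂ) t ∩ (closure A)ᶜ) :=
        isOpen_ball.inter isClosed_closure.isOpen_compl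
      have hdisj : Disjoint A (Metric.ball (0:ℂ) t ∩ (closure A)ᶜ) := by
        rw [Set.disjoint_left]
        rintro x hxA ⟨-, hxnc⟩
        exact hxnc (subset_closure hxA)
      have hcover : Metric.ball (0:ℂ) t ⊆ A ∪ (Metric.ball (0:ℂ) t ∩ (closure A)ᶜ) := by
        intro w hw
        by_cases hwc : w ∈ closure A
        · exact Or.inl (hclosed ⟨hw, hwc⟩)
        · exact Or.inr ⟨hw, hwc⟩
      have h0ball : (0:ℂ) ∈ Metric.ball (0:ℂ) t := by
        rw [Metric.mem_ball, dist_self]; exact ht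
      have hne : (Metric.ball (0:ℂ) t ∩ A).Nonempty :=
        ⟨0, h0ball, ⟨zr, hzrU, hzr0⟩, h0ball⟩
      exact (convex_ball (0:ℂ) t).isPreconnected.subset_left_of_subset_union
        hAopen hopen2 hdisj hcover hne
    intro w hw
    obtain ⟨⟨z, hzU, hze⟩, -⟩ := hsub hw
    exact ⟨z, hzU, hze⟩
  -- root-counting function
  set N : ℂ → ℕ := fun w =>
    Multiset.card (Multiset.filter (fun z => z ∈ U) (p - Polynomial.C w).roots) with hNdef
  have hN0 : N 0 = 1 := by
    simp only [hNdef]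
    rw [show p - Polynomial.C (0:ℂ) = p by simp]
    exact hone
  have hN1 : ∀ w ∈ Metric.ball (0:ℂ) t, 1 ≤ N w := by
    intro w hw
    obtain ⟨z, hzU, hze⟩ := hsurj w hw
    have h1 : z ∈ Multiset.filter (fun z => z ∈ U) (p - Polynomial.C w).roots :=
      Multiset.mem_filter.mpr ⟨(aux_mem_rootsX hp).mpr hze, hzU⟩
    have h2 := Multiset.card_pos_iff_exists_mem.mpr ⟨z, h1⟩
    simp only [hNdef]
    omega
  have hNopen1 : ∀ w₁ ∈ Metric.ball (0:ℂ) t, N w₁ = 1 → ∀ᶠ w in 𝓝 w₁, N w = 1 := by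
    intro w₁ hw₁ hNw₁
    have habsw₁ : ‖w₁‖ < t := by
      rw [Metric.mem_ball, Complex.dist_eq, sub_zero] at hw₁; exact hw₁
    simp only [hNdef] at hNw₁
    obtain ⟨s, hsfil⟩ := Multiset.card_eq_one.mp hNw₁
    have hsmem : s ∈ Multiset.filter (fun z => z ∈ U) (p - Polynomial.C w₁).roots := by
      rw [hsfil]; exact Multiset.mem_singleton_self s
    have hsroot : Polynomial.eval s p = w₁ :=
      (aux_mem_rootsX hp).mp (Multiset.mem_filter.mp hsmem).1
    have hsU : s ∈ U := (Multiset.mem_filter.mp hsmem).2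
    have hcount : Multiset.count s (p - Polynomial.C w₁).roots = 1 := by
      have h1 : Multiset.count s (Multiset.filter (fun z => z ∈ U) (p - Polynomial.C w₁).roots) = 1 := by
        rw [hsfil]; exact Multiset.count_singleton_self s
      rwa [Multiset.count_filter_of_pos hsU] at h1
    have hmult : Polynomial.rootMultiplicity s (p - Polynomial.C w₁) = 1 := by
      rwa [Polynomial.count_roots] at hcount
    have hderiv : Polynomial.eval s (Polynomial.derivative p) ≠ 0 :=
      (aux_mult_one_iff hp hsroot).mp hmult
    obtain ⟨ε₁, hε₁, hinj⟩ := aux_loc_inj hderiv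
    obtain ⟨ε₂, hε₂, hballU⟩ := Metric.isOpen_iff.mp hUopen s hsU
    have hdopen : IsOpen {ζ : ℂ | Polynomial.eval ζ (Polynomial.derivative p) ≠ 0} :=
      isOpen_ne.preimage (Polynomial.continuous _)
    obtain ⟨ε₃, hε₃, hballd⟩ := Metric.isOpen_iff.mp hdopen s hderiv
    have hnotcl : ∀ r ∈ (p - Polynomial.C w₁).roots.toFinset.filter (fun r => r ∉ U),
        0 < Metric.infDist r (closure U) := by
      intro r hr
      rw [Finset.mem_filter, Multiset.mem_toFinset] at hr
      have hrroot : Polynomial.eval r p = w₁ := (aux_mem_rootsX hp).mp hr.1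
      have hrncl : r ∉ closure U := by
        intro hrcl
        have hfr : r ∈ frontier U := by rw [hUopen.frontier_eq]; exact ⟨hrcl, hr.2⟩
        have h2 := habs_frontier r hfr
        rw [hrroot] at h2
        linarith
      exact (isClosed_closure.notMem_iff_infDist_pos ⟨w₀, subset_closure hw₀U⟩).mp hrncl
    obtain ⟨ε₄, hε₄, hfar⟩ := aux_finset_min _ _ hnotcl
    have hεpos : 0 < min (min ε₁ ε₂) (min ε₃ ε₄) := lt_min (lt_min hε₁ hε₂) (lt_min hε₃ hε₄)
    filter_upwards [aux_roots_near hp w₁ hεpos, isOpen_ball.mem_nhds hw₁] with w hnear hwball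
    have hUroots : ∀ r ∈ (p - Polynomial.C w).roots, r ∈ U →
        dist r s < min (min ε₁ ε₂) (min ε₃ ε₄) := by
      intro r hr hrU
      obtain ⟨s', hs'root, hds'⟩ := hnear r hr
      by_cases hs'U : s' ∈ U
      · have hs'fil : s' ∈ Multiset.filter (fun z => z ∈ U) (p - Polynomial.C w₁).roots :=
          Multiset.mem_filter.mpr ⟨hs'root, hs'U⟩
        rw [hsfil, Multiset.mem_singleton] at hs'fil
        rwa [hs'fil] at hds'
      · exfalso
        have hs'T : s' ∈ (p - Polynomial.C w₁).roots.toFinset.filter (fun r => r ∉ U) := by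
          rw [Finset.mem_filter, Multiset.mem_toFinset]; exact ⟨hs'root, hs'U⟩
        have h5 := hfar s' hs'T
        have h6 : Metric.infDist s' (closure U) ≤ dist s' r :=
          Metric.infDist_le_dist_of_mem (subset_closure hrU)
        rw [dist_comm] at h6
        have h7 : dist r s' < ε₄ :=
          lt_of_lt_of_le hds' (le_trans (min_le_right _ _) (min_le_right _ _))
        linarith
    obtain ⟨z₂, hz₂U, hz₂e⟩ := hsurj w hwball
    have hz₂root : z₂ ∈ (p - Polynomial.C w).roots := (aux_mem_rootsX hp).mpr hz₂e
    have hz₂ball : dist z₂ s < min (min ε₁ ε₂) (min ε₃ ε₄) := hUroots z₂ hz₂root hz₂U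
    have huniq : ∀ r ∈ (p - Polynomial.C w).roots, r ∈ U → r = z₂ := by
      intro r hr hrU
      have h1 : r ∈ Metric.ball s ε₁ := by
        rw [Metric.mem_ball]
        exact lt_of_lt_of_le (hUroots r hr hrU) (le_trans (min_le_left _ _) (min_le_left _ _))
      have h2 : z₂ ∈ Metric.ball s ε₁ := by
        rw [Metric.mem_ball]
        exact lt_of_lt_of_le hz₂ball (le_trans (min_le_left _ _) (min_le_left _ _))
      apply hinj h1 h2
      show Polynomial.eval r p = Polynomial.eval z₂ p
      rw [hz₂e, (aux_mem_rootsX hp).mp hr]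
    have hder₂ : Polynomial.eval z₂ (Polynomial.derivative p) ≠ 0 := by
      apply hballd
      rw [Metric.mem_ball]
      exact lt_of_lt_of_le hz₂ball (le_trans (min_le_right _ _) (min_le_left _ _))
    have hm₂ : Polynomial.rootMultiplicity z₂ (p - Polynomial.C w) = 1 :=
      (aux_mult_one_iff hp hz₂e).mpr hder₂
    have hrep : Multiset.filter (fun z => z ∈ U) (p - Polynomial.C w).roots
        = Multiset.replicate
            (Multiset.card (Multiset.filter (fun z => z ∈ U) (p - Polynomial.C w).roots)) z₂ := by
      apply Multiset.eq_replicate_card.mpr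
      intro b hb
      exact huniq b (Multiset.mem_filter.mp hb).1 (Multiset.mem_filter.mp hb).2
    have hcnt : Multiset.count z₂ (Multiset.filter (fun z => z ∈ U) (p - Polynomial.C w).roots)
        = Multiset.card (Multiset.filter (fun z => z ∈ U) (p - Polynomial.C w).roots) := by
      conv_lhs => rw [hrep]
      rw [Multiset.count_replicate]
      simp
    have hcnt2 : Multiset.count z₂ (Multiset.filter (fun z => z ∈ U) (p - Polynomial.C w).roots)
        = 1 := by
      rw [Multiset.count_filter_of_pos hz₂U, Polynomial.count_roots, hm₂]
    simp only [hNdef]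
    rw [← hcnt]
    exact hcnt2
  have hNopen2 : ∀ w₁ ∈ Metric.ball (0:ℂ) t, 2 ≤ N w₁ → ∀ᶠ w in 𝓝 w₁, 2 ≤ N w := by
    intro w₁ hw₁ hN2
    simp only [hNdef] at hN2
    by_cases hex : ∃ a ∈ Multiset.filter (fun z => z ∈ U) (p - Polynomial.C w₁).roots,
        ∃ b ∈ Multiset.filter (fun z => z ∈ U) (p - Polynomial.C w₁).roots, a ≠ b
    · obtain ⟨a, ha, b, hb, hab⟩ := hex
      have haU := (Multiset.mem_filter.mp ha).2
      have hbU := (Multiset.mem_filter.mp hb).2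
      have hae : Polynomial.eval a p = w₁ := (aux_mem_rootsX hp).mp (Multiset.mem_filter.mp ha).1
      have hbe : Polynomial.eval b p = w₁ := (aux_mem_rootsX hp).mp (Multiset.mem_filter.mp hb).1
      obtain ⟨ra, hrapos, hraU⟩ := Metric.isOpen_iff.mp hUopen a haU
      obtain ⟨rb, hrbpos, hrbU⟩ := Metric.isOpen_iff.mp hUopen b hbU
      have hdab : 0 < dist a b := dist_pos.mpr hab
      have hrpos : 0 < min (min ra rb) (dist a b / 2) :=
        lt_min (lt_min hrapos hrbpos) (by linarith)
      have hdisj2 : ∀ x, x ∈ Metric.ball a (min (min ra rb) (dist a b / 2)) →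
          x ∈ Metric.ball b (min (min ra rb) (dist a b / 2)) → False := by
        intro x hxa hxb
        rw [Metric.mem_ball] at hxa hxb
        have h1 : dist a b ≤ dist x a + dist x b := dist_triangle_left a b x
        have h2 : min (min ra rb) (dist a b / 2) ≤ dist a b / 2 := min_le_right _ _
        linarith
      have hWa : IsOpen ((fun z => Polynomial.eval z p) '' Metric.ball a (min (min ra rb) (dist a b / 2))) :=
        aux_isOpenMapX hp _ isOpen_ball
      have hWb : IsOpen ((fun z => Polynomial.eval z p) '' Metric.ball b (min (min ra rb) (dist a b / 2))) :=
        aux_isOpenMapX hp _ isOpen_ball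
      have hw₁a : w₁ ∈ (fun z => Polynomial.eval z p) '' Metric.ball a (min (min ra rb) (dist a b / 2)) :=
        ⟨a, Metric.mem_ball_self hrpos, hae⟩
      have hw₁b : w₁ ∈ (fun z => Polynomial.eval z p) '' Metric.ball b (min (min ra rb) (dist a b / 2)) :=
        ⟨b, Metric.mem_ball_self hrpos, hbe⟩
      filter_upwards [hWa.mem_nhds hw₁a, hWb.mem_nhds hw₁b] with w hwa hwb
      obtain ⟨a', ha', hae'⟩ := hwa
      obtain ⟨b', hb', hbe'⟩ := hwb
      have ha'U : a' ∈ U :=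
        hraU (Metric.ball_subset_ball (le_trans (min_le_left _ _) (min_le_left _ _)) ha')
      have hb'U : b' ∈ U :=
        hrbU (Metric.ball_subset_ball (le_trans (min_le_left _ _) (min_le_right _ _)) hb')
      have hab' : a' ≠ b' := fun h => hdisj2 a' ha' (h ▸ hb')
      simp only [hNdef]
      exact aux_two_le_card
        (Multiset.mem_filter.mpr ⟨(aux_mem_rootsX hp).mpr hae', ha'U⟩)
        (Multiset.mem_filter.mpr ⟨(aux_mem_rootsX hp).mpr hbe', hb'U⟩) hab'
    · push_neg at hex
      have hpos : 0 < Multiset.card (Multiset.filter (fun z => z ∈ U) (p - Polynomial.C w₁).roots) := by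
        omega
      obtain ⟨z₂, hz₂⟩ := Multiset.card_pos_iff_exists_mem.mp hpos
      have hz₂U := (Multiset.mem_filter.mp hz₂).2
      have hz₂e : Polynomial.eval z₂ p = w₁ :=
        (aux_mem_rootsX hp).mp (Multiset.mem_filter.mp hz₂).1
      have hrep : Multiset.filter (fun z => z ∈ U) (p - Polynomial.C w₁).roots
          = Multiset.replicate
              (Multiset.card (Multiset.filter (fun z => z ∈ U) (p - Polynomial.C w₁).roots)) z₂ :=
        Multiset.eq_replicate_card.mpr (fun b hb => hex b hb z₂ hz₂)
      have hcnt : 2 ≤ Multiset.count z₂ (Multiset.filter (fun z => z ∈ U) (p - Polynomial.C w₁).roots) := by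
        conv_rhs => rw [hrep]
        rw [Multiset.count_replicate]
        simp only [if_pos rfl]
        exact hN2
      have hmult2 : 2 ≤ Polynomial.rootMultiplicity z₂ (p - Polynomial.C w₁) := by
        rw [← Polynomial.count_roots]
        rwa [Multiset.count_filter_of_pos hz₂U] at hcnt
      obtain ⟨r₁, hr₁pos, hr₁U⟩ := Metric.isOpen_iff.mp hUopen z₂ hz₂U
      have hdp := aux_double_point hp hz₂e hmult2 hr₁pos
      rw [eventually_nhdsWithin_iff] at hdp
      filter_upwards [hdp] with w hw
      by_cases hww : w = w₁
      · subst hww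
        simp only [hNdef]
        exact hN2
      · obtain ⟨a, b, haball, hbball, hab, hae', hbe'⟩ :=
          hw (Set.mem_compl_singleton_iff.mpr hww)
        simp only [hNdef]
        exact aux_two_le_card
          (Multiset.mem_filter.mpr ⟨(aux_mem_rootsX hp).mpr hae', hr₁U haball⟩)
          (Multiset.mem_filter.mpr ⟨(aux_mem_rootsX hp).mpr hbe', hr₁U hbball⟩) hab
  have hkey : ∀ w ∈ Metric.ball (0:ℂ) t, N w = 1 := by
    have hS1open : IsOpen {w : ℂ | w ∈ Metric.ball (0:ℂ) t ∧ N w = 1} := by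
      rw [isOpen_iff_mem_nhds]
      rintro w ⟨hwb, hw1⟩
      filter_upwards [isOpen_ball.mem_nhds hwb, hNopen1 w hwb hw1] with x hx1 hx2
      exact ⟨hx1, hx2⟩
    have hS2open : IsOpen {w : ℂ | w ∈ Metric.ball (0:ℂ) t ∧ 2 ≤ N w} := by
      rw [isOpen_iff_mem_nhds]
      rintro w ⟨hwb, hw2⟩
      filter_upwards [isOpen_ball.mem_nhds hwb, hNopen2 w hwb hw2] with x hx1 hx2
      exact ⟨hx1, hx2⟩
    have hdisjS : Disjoint {w : ℂ | w ∈ Metric.ball (0:ℂ) t ∧ N w = 1}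
        {w : ℂ | w ∈ Metric.ball (0:ℂ) t ∧ 2 ≤ N w} := by
      rw [Set.disjoint_left]
      rintro x ⟨-, h1⟩ ⟨-, h2⟩
      omega
    have hcoverS : Metric.ball (0:ℂ) t ⊆ {w : ℂ | w ∈ Metric.ball (0:ℂ) t ∧ N w = 1}
        ∪ {w : ℂ | w ∈ Metric.ball (0:ℂ) t ∧ 2 ≤ N w} := by
      intro w hw
      have h1 := hN1 w hw
      rcases Nat.lt_or_ge (N w) 2 with h | h
      · exact Or.inl ⟨hw, by omega⟩
      · exact Or.inr ⟨hw, h⟩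
    have h0m : (0:ℂ) ∈ Metric.ball (0:ℂ) t := by rw [Metric.mem_ball, dist_self]; exact ht
    have hsub := (convex_ball (0:ℂ) t).isPreconnected.subset_left_of_subset_union
      hS1open hS2open hdisjS hcoverS ⟨0, h0m, h0m, hN0⟩
    exact fun w hw => (hsub hw).2
  constructor
  · refine ⟨?_, ?_, ?_⟩
    · intro z hz
      rw [Metric.mem_ball, Complex.dist_eq, sub_zero]
      exact hmapsto z hz
    · intro z₁ hz₁ z₂ hz₂ heq
      by_contra hne
      have hwm : Polynomial.eval z₁ p ∈ Metric.ball (0:ℂ) t := by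
        rw [Metric.mem_ball, Complex.dist_eq, sub_zero]
        exact hmapsto z₁ hz₁
      have h2 : 2 ≤ N (Polynomial.eval z₁ p) := by
        simp only [hNdef]
        exact aux_two_le_card
          (Multiset.mem_filter.mpr ⟨(aux_mem_rootsX hp).mpr rfl, hz₁⟩)
          (Multiset.mem_filter.mpr ⟨(aux_mem_rootsX hp).mpr heq.symm, hz₂⟩) hne
      have h3 := hkey _ hwm
      omega
    · intro w hw
      obtain ⟨z, hzU, hze⟩ := hsurj w hw
      exact ⟨z, hzU, hze⟩
  · intro z hzU
    have hwm : Polynomial.eval z p ∈ Metric.ball (0:ℂ) t := by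
      rw [Metric.mem_ball, Complex.dist_eq, sub_zero]
      exact hmapsto z hzU
    have h1 := hkey _ hwm
    simp only [hNdef] at h1
    obtain ⟨s, hsfil⟩ := Multiset.card_eq_one.mp h1
    have hzfil : z ∈ Multiset.filter (fun z' => z' ∈ U) (p - Polynomial.C (Polynomial.eval z p)).roots :=
      Multiset.mem_filter.mpr ⟨(aux_mem_rootsX hp).mpr rfl, hzU⟩
    rw [hsfil, Multiset.mem_singleton] at hzfil
    have hcnt : Multiset.count z
        (Multiset.filter (fun z' => z' ∈ U) (p - Polynomial.C (Polynomial.eval z p)).roots) = 1 := by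
      rw [hsfil, ← hzfil]
      exact Multiset.count_singleton_self z
    rw [Multiset.count_filter_of_pos hzU, Polynomial.count_roots] at hcnt
    exact (aux_mult_one_iff hp rfl).mp hcnt
end

section
/- Fix Δ ∈ (0, 1/4), r > 0, and K > 0. Let μ be a probability measure on ℂ whose density with respect to Lebesgue measure is bounded above by (K/π)(1 + |z|²)^{−2} (i.e., μ has density at most K with respect to the uniform measure on the Riemann sphere in the coordinate centered at infinity). Let ξ, ξ_1, …, ξ_{N−1} be i.i.d. samples from μ. Then there is a constant C = C(K, r, Δ) such that for all N ≥ 2: P( |ξ| ≤ N^Δ and |ξ − ξ_j| > 4r|ξ|/N for all j = 1,…,N−1 ) ≥ 1 − C·(N^{−2Δ} + N^{−1+2Δ}). In particular P(|ξ| > N^Δ) ≤ C·N^{−2Δ}. -/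
open MeasureTheory
open scoped NNReal ENNReal

lemma pi_eval_measure {n : ℕ} (μ : Measure ℂ) [IsProbabilityMeasure μ] (j : Fin n)
    (s : Set ℂ) :
    Measure.pi (fun _ : Fin n => μ) (Function.eval j ⁻¹' s) = μ s := by
  rw [← Set.univ_pi_update_univ, Measure.pi_pi]
  rw [Finset.prod_eq_single j (fun i _ hij => by simp [Function.update_of_ne hij])
    (fun h => absurd (Finset.mem_univ j) h)]
  simp

lemma ball_bound {K : ℝ} (hK : 0 < K) {f : ℂ → ℝ≥0∞}
    (hfbd : ∀ z : ℂ, f z ≤ ENNReal.ofReal (K / Real.pi / (1 + ‖z‖ ^ 2) ^ 2))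
    {μ : Measure ℂ} (hμ : μ = volume.withDensity f) (c : ℂ) (ρ : ℝ) :
    μ (Metric.closedBall c ρ) ≤ ENNReal.ofReal (K * ρ ^ 2) := by
  rcases lt_or_ge ρ 0 with hρ | hρ
  · simp [hμ, Metric.closedBall_eq_empty.mpr hρ]
  rw [hμ, withDensity_apply _ measurableSet_closedBall]
  calc ∫⁻ z in Metric.closedBall c ρ, f z
      ≤ ∫⁻ _ in Metric.closedBall c ρ, ENNReal.ofReal (K / Real.pi) := by
        refine setLIntegral_mono measurable_const fun z _ => (hfbd z).trans ?_
        apply ENNReal.ofReal_le_ofReal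
        apply div_le_self (by positivity)
        nlinarith [sq_nonneg (‖z‖), sq_nonneg (‖z‖ ^ 2)]
    _ = ENNReal.ofReal (K / Real.pi) * volume (Metric.closedBall c ρ) := by
        rw [setLIntegral_const]
    _ ≤ ENNReal.ofReal (K * ρ ^ 2) := by
        rw [Complex.volume_closedBall, ← ENNReal.ofReal_coe_nnreal, NNReal.coe_real_pi,
          ← ENNReal.ofReal_pow hρ, ← ENNReal.ofReal_mul (by positivity),
          ← ENNReal.ofReal_mul (by positivity)]
        apply ENNReal.ofReal_le_ofReal
        rw [div_mul_eq_mul_div, div_le_iff₀ Real.pi_pos]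
        ring_nf
        rw [mul_comm]

lemma tail_bound {K : ℝ} (hK : 0 < K) {f : ℂ → ℝ≥0∞}
    (hfbd : ∀ z : ℂ, f z ≤ ENNReal.ofReal (K / Real.pi / (1 + ‖z‖ ^ 2) ^ 2))
    {μ : Measure ℂ} (hμ : μ = volume.withDensity f) (R : ℝ) (hR : 0 < R) :
    μ {z : ℂ | R < ‖z‖} ≤ ENNReal.ofReal (6 * K / R ^ 2) := by
  set S : ℕ → Set ℂ := fun k =>
    {z | 2 ^ k * R < ‖z‖ ∧ ‖z‖ ≤ 2 ^ (k + 1) * R} with hS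
  have habs : Measurable fun z : ℂ => ‖z‖ := continuous_norm.measurable
  have hSm : ∀ k, MeasurableSet (S k) := fun k =>
    (measurableSet_lt measurable_const habs).inter (measurableSet_le habs measurable_const)
  have cover : {z : ℂ | R < ‖z‖} ⊆ ⋃ k, S k := by
    intro z hz
    have hz' : R < ‖z‖ := hz
    have hex : ∃ n : ℕ, ‖z‖ ≤ 2 ^ (n + 1) * R := by
      obtain ⟨n, hn⟩ := pow_unbounded_of_one_lt (‖z‖ / R) (one_lt_two (α := ℝ))
      refine ⟨n, ?_⟩
      rw [div_lt_iff₀ hR] at hn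
      have h2 : (2:ℝ) ^ (n+1) = 2 * 2 ^ n := by ring
      nlinarith [mul_pos (pow_pos (zero_lt_two (α := ℝ)) n) hR]
    set k := Nat.find hex with hk
    have hk2 : ‖z‖ ≤ 2 ^ (k + 1) * R := Nat.find_spec hex
    have hk1 : 2 ^ k * R < ‖z‖ := by
      rcases Nat.eq_zero_or_pos k with h0 | hpos
      · simpa [h0] using hz'
      · have := Nat.find_min hex (m := k - 1) (by omega)
        push_neg at this
        have : 2 ^ (k - 1 + 1) * R < ‖z‖ := this
        rwa [Nat.sub_add_cancel hpos] at this
    exact Set.mem_iUnion.mpr ⟨k, hk1, hk2⟩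
  have hterm : ∀ k : ℕ, μ (S k) ≤ ENNReal.ofReal (4 * K / R ^ 2 * (1 / 4) ^ k) := by
    intro k
    have h2k : (0:ℝ) < 2 ^ k * R := by positivity
    rw [hμ, withDensity_apply _ (hSm k)]
    calc ∫⁻ z in S k, f z
        ≤ ∫⁻ _ in S k, ENNReal.ofReal (K / Real.pi / ((2 ^ k * R) ^ 2) ^ 2) := by
          refine setLIntegral_mono measurable_const fun z hzS => (hfbd z).trans ?_
          apply ENNReal.ofReal_le_ofReal
          apply div_le_div_of_nonneg_left (by positivity) (by positivity)
          have h1 : 2 ^ k * R ≤ ‖z‖ := le_of_lt hzS.1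
          have e1 : (2 ^ k * R) ^ 2 ≤ ‖z‖ ^ 2 := by nlinarith
          nlinarith [sq_nonneg (‖z‖), sq_nonneg ((2:ℝ) ^ k * R)]
      _ = ENNReal.ofReal (K / Real.pi / ((2 ^ k * R) ^ 2) ^ 2) * volume (S k) := by
          rw [setLIntegral_const]
      _ ≤ ENNReal.ofReal (K / Real.pi / ((2 ^ k * R) ^ 2) ^ 2) *
            volume (Metric.closedBall (0:ℂ) (2 ^ (k + 1) * R)) := by
          gcongr
          intro z hzS
          simp only [Metric.mem_closedBall, Complex.dist_eq, sub_zero]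
          exact hzS.2
      _ ≤ ENNReal.ofReal (4 * K / R ^ 2 * (1 / 4) ^ k) := by
          rw [Complex.volume_closedBall, ← ENNReal.ofReal_coe_nnreal, NNReal.coe_real_pi,
            ← ENNReal.ofReal_pow (by positivity), ← ENNReal.ofReal_mul (by positivity),
            ← ENNReal.ofReal_mul (by positivity)]
          apply ENNReal.ofReal_le_ofReal
          apply le_of_eq
          field_simp
          rw [div_pow, one_pow, show (4:ℝ)^k = (2^k)^2 by
              rw [show (4:ℝ) = 2^2 by norm_num, ← pow_mul, ← pow_mul, mul_comm]]
          have ha : ((2:ℝ)^k)^2 ≠ 0 := by positivity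
          rw [mul_one_div, eq_div_iff ha]
          ring
  calc μ {z : ℂ | R < ‖z‖} ≤ μ (⋃ k, S k) := measure_mono cover
    _ ≤ ∑' k, μ (S k) := measure_iUnion_le S
    _ ≤ ∑' k, ENNReal.ofReal (4 * K / R ^ 2 * (1 / 4) ^ k) := ENNReal.tsum_le_tsum hterm
    _ = ENNReal.ofReal (4 * K / R ^ 2) * ∑' k, ENNReal.ofReal (1 / 4) ^ k := by
        simp_rw [ENNReal.ofReal_mul (by positivity : (0:ℝ) ≤ 4 * K / R ^ 2),
          ENNReal.ofReal_pow (by norm_num : (0:ℝ) ≤ 1/4)]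
        rw [ENNReal.tsum_mul_left]
    _ = ENNReal.ofReal (4 * K / R ^ 2) * ENNReal.ofReal (4 / 3) := by
        rw [ENNReal.tsum_geometric, ← ENNReal.ofReal_one,
          ← ENNReal.ofReal_sub _ (by norm_num : (0:ℝ) ≤ 1/4)]
        norm_num
        rw [← ENNReal.ofReal_inv_of_pos (by norm_num : (0:ℝ) < 3/4)]
        norm_num
    _ ≤ ENNReal.ofReal (6 * K / R ^ 2) := by
        rw [← ENNReal.ofReal_mul (by positivity)]
        apply ENNReal.ofReal_le_ofReal
        rw [div_mul_eq_mul_div, div_le_div_iff₀ (by positivity) (by positivity)]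
        nlinarith [sq_nonneg R]

/-- fix `Δ ∈ (0,1/4)`, `r > 0`, `K > 0`.  Let `μ` be a probability measure
on `ℂ` with Lebesgue density bounded by `(K/π)(1+|z|²)⁻²` (density at most `K` with
respect to the uniform measure on the Riemann sphere, in the coordinate centered at
infinity).  For i.i.d. samples `ξ, ξ₁, …, ξ_{N−1}` from `μ`, with probability at least
`1 − C·(N^{−2Δ} + N^{−1+2Δ})` one has both `|ξ| ≤ N^Δ` and `|ξ − ξ_j| > 4r|ξ|/N` for all
`j`; in particular `P(|ξ| > N^Δ) ≤ C·N^{−2Δ}`. -/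
theorem zero_isolation_probability (Δ : ℝ) (hΔ0 : 0 < Δ) (hΔ : Δ < 1 / 4)
    (r : ℝ) (hr : 0 < r) (K : ℝ) (hK : 0 < K)
    (f : ℂ → ℝ≥0∞) (hf : Measurable f)
    (hfbd : ∀ z : ℂ, f z ≤ ENNReal.ofReal (K / Real.pi / (1 + ‖z‖ ^ 2) ^ 2))
    (μ : Measure ℂ) [IsProbabilityMeasure μ] (hμ : μ = volume.withDensity f) :
    ∃ C : ℝ, 0 < C ∧ ∀ N : ℕ, 2 ≤ N →
      (ENNReal.ofReal (1 - C * ((N : ℝ) ^ (-2 * Δ) + (N : ℝ) ^ (-1 + 2 * Δ))) ≤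
        (μ.prod (Measure.pi fun _ : Fin (N - 1) => μ))
          {ω : ℂ × (Fin (N - 1) → ℂ) |
            ‖ω.1‖ ≤ (N : ℝ) ^ Δ ∧
            ∀ j : Fin (N - 1),
              4 * r * ‖ω.1‖ / N < ‖ω.1 - ω.2 j‖}) ∧
      μ {ξ : ℂ | (N : ℝ) ^ Δ < ‖ξ‖} ≤
        ENNReal.ofReal (C * (N : ℝ) ^ (-2 * Δ)) := by
  refine ⟨6 * K + 16 * K * r ^ 2, by positivity, fun N hN => ?_⟩
  set C := 6 * K + 16 * K * r ^ 2 with hC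
  have hN0 : (0:ℝ) < N := Nat.cast_pos.mpr (by omega)
  set R : ℝ := (N : ℝ) ^ Δ with hRdef
  have hR : 0 < R := Real.rpow_pos_of_pos hN0 Δ
  have hR2 : R ^ 2 = (N : ℝ) ^ (2 * Δ) := by
    rw [hRdef, ← Real.rpow_natCast ((N:ℝ) ^ Δ) 2, ← Real.rpow_mul hN0.le]
    norm_num
    rw [mul_comm]
  have hneg : (N:ℝ) ^ (-2 * Δ) = ((N:ℝ) ^ (2 * Δ))⁻¹ := by
    rw [show (-2) * Δ = -(2 * Δ) by ring, Real.rpow_neg hN0.le]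
  have hpow2 : (N:ℝ) ^ ((2:ℕ):ℝ) = (N:ℝ) ^ (2:ℕ) := Real.rpow_natCast _ 2
  have hsplit : (N:ℝ) ^ (2 * Δ - 2) = (N:ℝ) ^ (2 * Δ) / (N:ℝ) ^ (2:ℕ) := by
    rw [← hpow2, ← Real.rpow_sub hN0]
    norm_num
  have h6 : 6 * K / R ^ 2 = 6 * K * (N:ℝ) ^ (-2 * Δ) := by
    rw [hR2, hneg, div_eq_mul_inv]
  have hprodshift : (N:ℝ) * (N:ℝ) ^ (2 * Δ - 2) = (N:ℝ) ^ (-1 + 2 * Δ) := by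
    rw [show -1 + 2 * Δ = 1 + (2 * Δ - 2) by ring, Real.rpow_add hN0, Real.rpow_one]
  have htail := tail_bound hK hfbd hμ R hR
  constructor
  · -- main event
    set ν : Measure (Fin (N-1) → ℂ) := Measure.pi fun _ : Fin (N-1) => μ with hν
    set P : Measure (ℂ × (Fin (N-1) → ℂ)) := μ.prod ν with hP
    haveI : IsProbabilityMeasure ν := by rw [hν]; infer_instance
    haveI : IsProbabilityMeasure P := by rw [hP]; infer_instance
    set G : Set (ℂ × (Fin (N-1) → ℂ)) :=
      {ω | ‖ω.1‖ ≤ R ∧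
        ∀ j : Fin (N-1), 4 * r * ‖ω.1‖ / N < ‖ω.1 - ω.2 j‖} with hG
    set B : Fin (N-1) → Set (ℂ × (Fin (N-1) → ℂ)) := fun j =>
      {ω | ‖ω.1 - ω.2 j‖ ≤ 4 * r * ‖ω.1‖ / N ∧
        ‖ω.1‖ ≤ R} with hB
    have hBmeas : ∀ j, MeasurableSet (B j) := by
      intro j
      have m1 : Measurable fun ω : ℂ × (Fin (N-1) → ℂ) => ‖ω.1 - ω.2 j‖ :=
        (continuous_norm.comp
          (continuous_fst.sub ((continuous_apply j).comp continuous_snd))).measurable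
      have m3 : Measurable fun ω : ℂ × (Fin (N-1) → ℂ) => ‖ω.1‖ :=
        (continuous_norm.comp continuous_fst).measurable
      have m2 : Measurable fun ω : ℂ × (Fin (N-1) → ℂ) => 4 * r * ‖ω.1‖ / N :=
        (m3.const_mul (4 * r)).div_const _
      exact (measurableSet_le m1 m2).inter (measurableSet_le m3 measurable_const)
    have hsub : Gᶜ ⊆ ({ξ : ℂ | R < ‖ξ‖} ×ˢ Set.univ) ∪ ⋃ j, B j := by
      intro ω hω
      simp only [hG, Set.mem_compl_iff, Set.mem_setOf_eq, not_and, not_forall, not_lt] at hω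
      by_cases h1 : ‖ω.1‖ ≤ R
      · obtain ⟨j, hj⟩ := hω h1
        exact Or.inr (Set.mem_iUnion.mpr ⟨j, hj, h1⟩)
      · exact Or.inl ⟨not_le.mp h1, Set.mem_univ _⟩
    have hPT : P ({ξ : ℂ | R < ‖ξ‖} ×ˢ Set.univ) = μ {ξ : ℂ | R < ‖ξ‖} := by
      rw [hP, Measure.prod_prod, measure_univ, mul_one]
    have hPB : ∀ j, P (B j) ≤ ENNReal.ofReal (16 * K * r ^ 2 * (N:ℝ) ^ (2 * Δ - 2)) := by
      intro j
      rw [hP, Measure.prod_apply (hBmeas j)]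
      have hpt : ∀ ξ : ℂ, ν (Prod.mk ξ ⁻¹' B j) ≤
          ENNReal.ofReal (16 * K * r ^ 2 * (N:ℝ) ^ (2 * Δ - 2)) := by
        intro ξ
        by_cases hξ : ‖ξ‖ ≤ R
        · have hsub2 : Prod.mk ξ ⁻¹' B j ⊆
              Function.eval j ⁻¹' Metric.closedBall ξ (4 * r * ‖ξ‖ / N) := by
            intro x hx
            simp only [hB, Set.mem_preimage, Set.mem_setOf_eq] at hx
            simp only [Set.mem_preimage, Function.eval, Metric.mem_closedBall, Complex.dist_eq]
            rw [norm_sub_rev]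
            exact hx.1
          have e : (4 * r * ‖ξ‖) ^ 2 ≤ (4 * r * R) ^ 2 := by
            have h := mul_self_le_mul_self (norm_nonneg ξ) hξ
            nlinarith [sq_nonneg r]
          calc ν (Prod.mk ξ ⁻¹' B j)
              ≤ ν (Function.eval j ⁻¹' Metric.closedBall ξ (4 * r * ‖ξ‖ / N)) :=
                measure_mono hsub2
            _ = μ (Metric.closedBall ξ (4 * r * ‖ξ‖ / N)) := by
                rw [hν]; exact pi_eval_measure μ j _
            _ ≤ ENNReal.ofReal (K * (4 * r * ‖ξ‖ / N) ^ 2) :=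
                ball_bound hK hfbd hμ _ _
            _ ≤ ENNReal.ofReal (16 * K * r ^ 2 * (N:ℝ) ^ (2 * Δ - 2)) := by
                apply ENNReal.ofReal_le_ofReal
                calc K * (4 * r * ‖ξ‖ / N) ^ 2
                    = K * ((4 * r * ‖ξ‖) ^ 2 / (N:ℝ) ^ 2) := by rw [div_pow]
                  _ ≤ K * ((4 * r * R) ^ 2 / (N:ℝ) ^ 2) := by gcongr
                  _ = 16 * K * r ^ 2 * (R ^ 2 / (N:ℝ) ^ 2) := by ring
                  _ = 16 * K * r ^ 2 * (N:ℝ) ^ (2 * Δ - 2) := by rw [hsplit, ← hR2]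
        · have hempty : Prod.mk ξ ⁻¹' B j = ∅ := by
            apply Set.eq_empty_iff_forall_notMem.mpr
            intro x hx
            exact hξ hx.2
          rw [hempty, measure_empty]
          exact zero_le
      calc ∫⁻ ξ, ν (Prod.mk ξ ⁻¹' B j) ∂μ
          ≤ ∫⁻ _, ENNReal.ofReal (16 * K * r ^ 2 * (N:ℝ) ^ (2 * Δ - 2)) ∂μ :=
            lintegral_mono hpt
        _ = ENNReal.ofReal (16 * K * r ^ 2 * (N:ℝ) ^ (2 * Δ - 2)) := by
            rw [lintegral_const, measure_univ, mul_one]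
    have hbad : P Gᶜ ≤
        ENNReal.ofReal (C * ((N:ℝ) ^ (-2 * Δ) + (N:ℝ) ^ (-1 + 2 * Δ))) := by
      calc P Gᶜ ≤ P (({ξ : ℂ | R < ‖ξ‖} ×ˢ Set.univ) ∪ ⋃ j, B j) :=
            measure_mono hsub
        _ ≤ P ({ξ : ℂ | R < ‖ξ‖} ×ˢ Set.univ) + P (⋃ j, B j) :=
            measure_union_le _ _
        _ ≤ μ {ξ : ℂ | R < ‖ξ‖} + ∑' j, P (B j) := by
            rw [hPT]; exact add_le_add_right (measure_iUnion_le B) _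
        _ ≤ ENNReal.ofReal (6 * K / R ^ 2) +
              (N:ℝ≥0∞) * ENNReal.ofReal (16 * K * r ^ 2 * (N:ℝ) ^ (2 * Δ - 2)) := by
            apply add_le_add htail
            rw [tsum_fintype]
            calc ∑ j : Fin (N-1), P (B j)
                ≤ (Finset.univ (α := Fin (N-1))).card •
                    ENNReal.ofReal (16 * K * r ^ 2 * (N:ℝ) ^ (2 * Δ - 2)) :=
                  Finset.sum_le_card_nsmul _ _ _ (fun j _ => hPB j)
              _ = ((N-1 : ℕ) : ℝ≥0∞) * ENNReal.ofReal (16 * K * r ^ 2 * (N:ℝ) ^ (2 * Δ - 2)) := by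
                  rw [nsmul_eq_mul]; simp
              _ ≤ (N:ℝ≥0∞) * ENNReal.ofReal (16 * K * r ^ 2 * (N:ℝ) ^ (2 * Δ - 2)) := by
                  gcongr
                  exact_mod_cast Nat.sub_le N 1
        _ = ENNReal.ofReal (6 * K * (N:ℝ) ^ (-2 * Δ)) +
              ENNReal.ofReal (16 * K * r ^ 2 * (N:ℝ) ^ (-1 + 2 * Δ)) := by
            rw [h6, ← ENNReal.ofReal_natCast N, ← ENNReal.ofReal_mul (by positivity)]
            congr 1
            apply congrArg
            rw [show (N:ℝ) * (16 * K * r ^ 2 * (N:ℝ) ^ (2 * Δ - 2)) =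
              16 * K * r ^ 2 * ((N:ℝ) * (N:ℝ) ^ (2 * Δ - 2)) by ring, hprodshift]
        _ ≤ ENNReal.ofReal (C * ((N:ℝ) ^ (-2 * Δ) + (N:ℝ) ^ (-1 + 2 * Δ))) := by
            rw [← ENNReal.ofReal_add (by positivity) (by positivity)]
            apply ENNReal.ofReal_le_ofReal
            have ha : 0 < (N:ℝ) ^ (-2 * Δ) := Real.rpow_pos_of_pos hN0 _
            have hb : 0 < (N:ℝ) ^ (-1 + 2 * Δ) := Real.rpow_pos_of_pos hN0 _
            rw [hC]
            nlinarith [mul_pos (show (0:ℝ) < 16 * K * r ^ 2 by positivity) ha,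
              mul_pos (show (0:ℝ) < 6 * K by positivity) hb]
    have h1 : (1:ℝ≥0∞) ≤ P G + P Gᶜ := by
      calc (1:ℝ≥0∞) = P Set.univ := measure_univ.symm
        _ = P (G ∪ Gᶜ) := by rw [Set.union_compl_self]
        _ ≤ P G + P Gᶜ := measure_union_le _ _
    calc ENNReal.ofReal (1 - C * ((N:ℝ) ^ (-2 * Δ) + (N:ℝ) ^ (-1 + 2 * Δ)))
        = 1 - ENNReal.ofReal (C * ((N:ℝ) ^ (-2 * Δ) + (N:ℝ) ^ (-1 + 2 * Δ))) := by
          rw [ENNReal.ofReal_sub _ (by positivity), ENNReal.ofReal_one]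
      _ ≤ 1 - P Gᶜ := tsub_le_tsub_left hbad 1
      _ ≤ P G := tsub_le_iff_right.mpr h1
  · -- tail part
    refine htail.trans (ENNReal.ofReal_le_ofReal ?_)
    rw [h6]
    have ha : 0 < (N:ℝ) ^ (-2 * Δ) := Real.rpow_pos_of_pos hN0 _
    rw [hC]
    nlinarith [mul_pos (by positivity : (0:ℝ) < 16 * K * r ^ 2) ha]
end

section
/- Fix r > 0 large enough that |arg(1 + e^{iθ}/r)| < 1/10 for all θ ∈ [0, 2π], and fix γ ∈ (0, 1]. There exists N₀ such that for all N ≥ N₀, all real ξ > 0, all w ∈ ℂ with r·ξ/N ≤ |w − ξ| ≤ 4r·ξ/N, and all e ∈ ℂ with |e| ≤ N^{1−γ}/ξ, the complex number E = −N/w + 1/(w − ξ) + e is nonzero and its argument satisfies arg(E) ∈ (π − 1/5, π + 1/5) (taking arg with values in (0, 2π)). -/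
private lemma arcsin_small {t : ℝ} (ht : |t| < Real.sin (1/5)) : |Real.arcsin t| < 1/5 := by
  have hπ := Real.pi_gt_three
  have h15 : (1/5 : ℝ) ∈ Set.Ioc (-(Real.pi/2)) (Real.pi/2) := by
    constructor <;> [linarith; linarith]
  rw [abs_lt] at ht ⊢
  constructor
  · have : Real.arcsin (-t) < 1/5 := (Real.arcsin_lt_iff_lt_sin' h15).2 (by linarith)
    rw [Real.arcsin_neg] at this; linarith
  · exact (Real.arcsin_lt_iff_lt_sin' h15).2 ht.2

private lemma arg_near_pi_aux (z : ℂ) (hre : z.re < 0)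
    (him : |z.im| < Real.sin (1/5) * (-z.re)) :
    z ≠ 0 ∧ (if 0 ≤ Complex.arg z then Complex.arg z else Complex.arg z + 2 * Real.pi)
      ∈ Set.Ioo (Real.pi - 1/5) (Real.pi + 1/5) := by
  have hπ := Real.pi_gt_three
  have hz : z ≠ 0 := fun h => by simp [h] at hre
  have habs : 0 < ‖z‖ := norm_pos_iff.mpr hz
  have hrele : -z.re ≤ ‖z‖ := by
    have h := Complex.abs_re_le_norm z
    rw [abs_le] at h; linarith [h.1]
  have hsin : 0 ≤ Real.sin (1/5) :=
    Real.sin_nonneg_of_nonneg_of_le_pi (by norm_num) (by linarith)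
  have hq : ∀ s : ℝ, |s| = |z.im| → |s / ‖z‖| < Real.sin (1/5) := by
    intro s hs
    rw [abs_div, abs_of_pos habs, div_lt_iff₀ habs]
    calc |s| = |z.im| := hs
      _ < Real.sin (1/5) * (-z.re) := him
      _ ≤ Real.sin (1/5) * ‖z‖ := mul_le_mul_of_nonneg_left hrele hsin
  rcases le_or_gt 0 z.im with him0 | him0
  · rw [Complex.arg_of_re_neg_of_im_nonneg hre him0]
    have hA := arcsin_small (hq ((-z).im) (by simp))
    rw [abs_lt] at hA
    rw [if_pos (by linarith)]
    exact ⟨hz, Set.mem_Ioo.2 ⟨by linarith, by linarith⟩⟩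
  · rw [Complex.arg_of_re_neg_of_im_neg hre him0]
    have hA := arcsin_small (hq ((-z).im) (by simp))
    rw [abs_lt] at hA
    rw [if_neg (by push_neg; linarith)]
    exact ⟨hz, Set.mem_Ioo.2 ⟨by linarith, by linarith⟩⟩

private lemma r_gt_nine (r : ℝ) (hr : 0 < r)
    (hrarg : ∀ θ ∈ Set.Icc (0:ℝ) (2*Real.pi),
      |Complex.arg (1 + Complex.exp (θ * Complex.I) / r)| < 1/10) :
    9 < r := by
  have hπ := Real.pi_gt_three
  have hπpos := Real.pi_pos
  have h := hrarg (Real.pi/2) ⟨by linarith, by linarith⟩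
  have hexp : Complex.exp ((Real.pi/2 : ℝ) * Complex.I) = Complex.I := by
    rw [Complex.exp_mul_I, ← Complex.ofReal_cos, ← Complex.ofReal_sin,
      Real.cos_pi_div_two, Real.sin_pi_div_two]
    simp
  rw [hexp] at h
  set z : ℂ := 1 + Complex.I / r with hzdef
  have hre : z.re = 1 := by
    simp [hzdef, Complex.div_re, Complex.normSq_ofReal]
  have him : z.im = 1/r := by
    rw [hzdef, Complex.add_im, Complex.div_ofReal_im]; simp
  have harg0 : 0 ≤ z.arg := Complex.arg_nonneg_iff.2 (by rw [him]; positivity)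
  have htan : Real.tan z.arg = 1/r := by rw [Complex.tan_arg, hre, him]; simp
  have h1 : Real.tan z.arg < Real.tan (1/10) :=
    Real.tan_lt_tan_of_nonneg_of_lt_pi_div_two harg0 (by linarith) (lt_of_abs_lt h)
  have hsin := Real.sin_lt (by norm_num : (0:ℝ) < 1/10)
  have hcos := Real.one_sub_sq_div_two_le_cos (x := 1/10)
  have hcpos : 0 < Real.cos (1/10) := by nlinarith
  have h2 : Real.tan (1/10) < 1/9 := by
    rw [Real.tan_eq_sin_div_cos, div_lt_iff₀ hcpos]; nlinarith
  have h3 : 1/r < 1/9 := by rw [htan] at h1; linarith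
  have h4 := (div_lt_div_iff₀ hr (by norm_num : (0:ℝ) < 9)).1 h3
  linarith

set_option maxHeartbeats 1000000 in
/-- fix `r > 0` with `|arg(1 + e^{iθ}/r)| < 1/10` for all `θ ∈ [0,2π]`, and
`γ ∈ (0,1]`.  For all `N` large, all real `ξ > 0`, all `w` in the annulus
`rξ/N ≤ |w − ξ| ≤ 4rξ/N`, and all perturbations `e` with `|e| ≤ N^{1−γ}/ξ`, the number
`E = −N/w + 1/(w − ξ) + e` is nonzero and its argument, taken with values in `(0, 2π)`,
lies in `(π − 1/5, π + 1/5)`. -/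
theorem field_argument_near_pi (r : ℝ) (hr : 0 < r)
    (hrarg : ∀ θ ∈ Set.Icc (0 : ℝ) (2 * Real.pi),
      |Complex.arg (1 + Complex.exp (θ * Complex.I) / r)| < 1 / 10)
    (γ : ℝ) (hγ0 : 0 < γ) (hγ1 : γ ≤ 1) :
    ∃ N₀ : ℕ, ∀ N : ℕ, N₀ ≤ N → ∀ ξ : ℝ, 0 < ξ → ∀ w : ℂ,
      r * ξ / N ≤ ‖w - (ξ : ℂ)‖ →
      ‖w - (ξ : ℂ)‖ ≤ 4 * r * ξ / N →
      ∀ e : ℂ, ‖e‖ ≤ (N : ℝ) ^ (1 - γ) / ξ →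
        -(N : ℂ) / w + 1 / (w - (ξ : ℂ)) + e ≠ 0 ∧
        (if 0 ≤ Complex.arg (-(N : ℂ) / w + 1 / (w - (ξ : ℂ)) + e) then
            Complex.arg (-(N : ℂ) / w + 1 / (w - (ξ : ℂ)) + e)
          else Complex.arg (-(N : ℂ) / w + 1 / (w - (ξ : ℂ)) + e) + 2 * Real.pi)
          ∈ Set.Ioo (Real.pi - 1 / 5) (Real.pi + 1 / 5) := by
  have hr9 : 9 < r := r_gt_nine r hr (by exact_mod_cast hrarg)
  refine ⟨max ⌈400 * r⌉₊ ⌈(100:ℝ) ^ γ⁻¹⌉₊ + 1, ?_⟩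
  intro N hN ξ hξ w hw1 hw2 e he
  have hN400 : 400 * r ≤ (N:ℝ) :=
    Nat.ceil_le.1 (le_trans (le_trans (le_max_left _ _) (Nat.le_succ _)) hN)
  have h100 : (100:ℝ) ^ γ⁻¹ ≤ (N:ℝ) :=
    Nat.ceil_le.1 (le_trans (le_trans (le_max_right _ _) (Nat.le_succ _)) hN)
  have hNpos : (0:ℝ) < N := by nlinarith
  -- perturbation bound
  have hNγ : (N:ℝ) ^ (1 - γ) ≤ (N:ℝ) * (1/100) := by
    have h1 : (100:ℝ) ≤ (N:ℝ) ^ γ := by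
      calc (100:ℝ) = ((100:ℝ) ^ γ⁻¹) ^ γ :=
            (Real.rpow_inv_rpow (by norm_num) (ne_of_gt hγ0)).symm
        _ ≤ (N:ℝ) ^ γ := Real.rpow_le_rpow (by positivity) h100 hγ0.le
    have hγpos : (0:ℝ) < (N:ℝ) ^ γ := by positivity
    have h2 : (N:ℝ) ^ (1 - γ) = (N:ℝ) / (N:ℝ) ^ γ := by
      rw [Real.rpow_sub hNpos, Real.rpow_one]
    rw [h2, div_le_iff₀ hγpos]
    nlinarith
  set z : ℂ := -(N : ℂ) / w + 1 / (w - (ξ : ℂ)) + e with hzdef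
  set u : ℂ := w - (ξ : ℂ) with hudef
  set s : ℝ := (N:ℝ) / ξ with hsdef
  have hspos : 0 < s := by positivity
  have hupos : 0 < ‖u‖ := lt_of_lt_of_le (by positivity) hw1
  have hu0 : u ≠ 0 := fun h => by simp [h] at hupos
  have huξ : ‖u‖ ≤ ξ / 100 := by
    calc ‖u‖ ≤ 4 * r * ξ / N := hw2
      _ ≤ ξ / 100 := by
          rw [div_le_div_iff₀ hNpos (by norm_num)]
          nlinarith
  have hwabs : 99/100 * ξ ≤ ‖w‖ := by
    have h1 : ‖(ξ:ℂ)‖ ≤ ‖w‖ + ‖u‖ := by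
      calc ‖(ξ:ℂ)‖ = ‖w - u‖ := by
            congr 1; rw [hudef]; ring
        _ ≤ ‖w‖ + ‖u‖ := norm_sub_le _ _
        _ = ‖w‖ + ‖u‖ := rfl
    rw [Complex.norm_real, Real.norm_eq_abs, abs_of_pos hξ] at h1
    linarith
  have hw0 : w ≠ 0 := by
    intro h
    rw [h] at hwabs
    simp at hwabs
    linarith
  have hξ0 : (ξ:ℂ) ≠ 0 := Complex.ofReal_ne_zero.2 (ne_of_gt hξ)
  -- the key splitting
  have hsplit : z + (s:ℂ) = (N:ℂ) * u / ((ξ:ℂ) * w) + (1 / u + e) := by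
    rw [hzdef, hsdef, hudef]
    push_cast
    field_simp
    ring
  have hwpos : 0 < ‖w‖ := lt_of_lt_of_le (by positivity) hwabs
  have hA1 : ‖((N:ℂ) * u / ((ξ:ℂ) * w))‖ ≤ 1/99 * s := by
    rw [norm_div, norm_mul, norm_mul, Complex.norm_natCast, Complex.norm_real, Real.norm_eq_abs, abs_of_pos hξ]
    rw [div_le_iff₀ (mul_pos hξ hwpos), hsdef]
    have key : 1/99 * ((N:ℝ)/ξ) * (ξ * ‖w‖) = 1/99 * (N:ℝ) * ‖w‖ := by
      field_simp
    rw [key]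
    nlinarith [mul_le_mul_of_nonneg_left huξ hNpos.le,
      mul_le_mul_of_nonneg_left hwabs (by positivity : (0:ℝ) ≤ 1/99 * (N:ℝ))]
  have hA2 : ‖(1 / u)‖ ≤ 1/9 * s := by
    rw [norm_div, norm_one, div_le_iff₀ hupos]
    have hsr : s * (r * ξ / N) = r := by
      rw [hsdef]; field_simp
    calc (1:ℝ) ≤ 1/9 * r := by linarith
      _ = 1/9 * (s * (r * ξ / N)) := by rw [hsr]
      _ ≤ 1/9 * (s * ‖u‖) := by
          have := mul_le_mul_of_nonneg_left hw1 hspos.le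
          linarith
      _ = 1/9 * s * ‖u‖ := by ring
  have hA3 : ‖e‖ ≤ 1/100 * s := by
    calc ‖e‖ ≤ (N : ℝ) ^ (1 - γ) / ξ := he
      _ ≤ (N:ℝ) * (1/100) / ξ := by
          gcongr
      _ = 1/100 * s := by rw [hsdef]; ring
  have hmain : ‖(z + (s:ℂ))‖ ≤ 2/15 * s := by
    rw [hsplit]
    calc ‖((N:ℂ) * u / ((ξ:ℂ) * w) + (1 / u + e))‖
        ≤ ‖((N:ℂ) * u / ((ξ:ℂ) * w))‖ + ‖(1 / u + e)‖ :=
          norm_add_le _ _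
      _ ≤ ‖((N:ℂ) * u / ((ξ:ℂ) * w))‖ + (‖(1 / u)‖ + ‖e‖) :=
          by linarith [norm_add_le (1/u) e]
      _ ≤ 1/99 * s + (1/9 * s + 1/100 * s) := by linarith
      _ ≤ 2/15 * s := by nlinarith
  have hre' : (z + (s:ℂ)).re = z.re + s := by simp
  have him' : (z + (s:ℂ)).im = z.im := by simp
  have h1 : |z.re + s| ≤ 2/15 * s := by
    rw [← hre']
    exact le_trans (Complex.abs_re_le_norm _) hmain
  have h2 : |z.im| ≤ 2/15 * s := by
    rw [← him']
    exact le_trans (Complex.abs_im_le_norm _) hmain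
  rw [abs_le] at h1
  have hzre : z.re ≤ -(13/15) * s := by linarith [h1.2]
  have hrelt : z.re < 0 := by nlinarith
  have hsin : 2/13 < Real.sin (1/5) := by
    have := Real.sin_gt_sub_cube (by norm_num : (0:ℝ) < 1/5)
    nlinarith
  have hsinpos : (0:ℝ) ≤ Real.sin (1/5) := by linarith
  have himlt : |z.im| < Real.sin (1/5) * (-z.re) := by
    have hst : 2/13 * (13/15 * s) < Real.sin (1/5) * (13/15 * s) :=
      mul_lt_mul_of_pos_right hsin (by positivity)
    have hst2 : Real.sin (1/5) * (13/15 * s) ≤ Real.sin (1/5) * (-z.re) :=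
      mul_le_mul_of_nonneg_left (by linarith) hsinpos
    calc |z.im| ≤ 2/15 * s := h2
      _ = 2/13 * (13/15 * s) := by ring
      _ < Real.sin (1/5) * (13/15 * s) := hst
      _ ≤ Real.sin (1/5) * (-z.re) := hst2
  exact arg_near_pi_aux z hrelt himlt
end
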